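/- arXiv:1201.3569 — 3 statements merged into one kernel-verified Lean document; each statement's English description precedes it below -/
import Mathlib

section
/- Let α ∈ (0,1], β > α, γ = αβ/(β−α), c > 0, and let f : 𝒳 → ℝ be measurable. Define h(x) = log E_x exp( c^{−γ} |Z_0(f)|^γ ). Assume there exist a measurable function V : 𝒳 → [0,∞), a set C ∈ ℬ and constants b > 0, K > 0 such that V(x) ≤ K for all x ∈ C and, for every x ∈ 𝒳, (P^m V)(x) − V(x) ≤ −exp(h(x)) + b·1_C(x), where P^m is the m-step transition kernel. Then sup_{x∈C} ‖ Σ_{k=0}^{τ_C−1} |Z_k(f)| ‖_{ψ_α, P_x} ≤ c_1 · c_2, where c_1 = sup_{x∈C} ‖τ_C‖_{ψ_β, P_x} and c_2 = c·( max( log(b+K)/log 2 , 1 ) )^{1/γ}, the inequality being interpreted in [0,∞]. -/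
open MeasureTheory ProbabilityTheory Real
open scoped ENNReal

/-- Prepend a point to a trajectory. -/
def prependPath {𝒳 : Type*} (x : 𝒳) (ω : ℕ → 𝒳) : ℕ → 𝒳 :=
  fun n => Nat.casesOn n x fun k => ω k

/-- `Z_k(f) = Σ_{j=0}^{m−1} f(X_{km+j})` evaluated on a trajectory. -/
noncomputable def pathZ {𝒳 : Type*} (m : ℕ) (f : 𝒳 → ℝ) (k : ℕ) (ω : ℕ → 𝒳) : ℝ :=
  ∑ j ∈ Finset.range m, f (ω (k * m + j))

/-- The first return time `τ_C = inf{k ≥ 1 : X_{km} ∈ C}` of the `m`-skeleton to `C`,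
with values in `[0,∞]` (`inf ∅ = ∞`). -/
noncomputable def pathTau {𝒳 : Type*} (m : ℕ) (C : Set 𝒳) (ω : ℕ → 𝒳) : ℝ≥0∞ :=
  sInf {c : ℝ≥0∞ | ∃ j : ℕ, c = j ∧ 1 ≤ j ∧ ω (j * m) ∈ C}

/-- `Σ_{k=0}^{τ−1} u_k`, interpreted in `[0,∞]`. -/
noncomputable def sumBefore (τ : ℝ≥0∞) (u : ℕ → ℝ≥0∞) : ℝ≥0∞ :=
  ∑' k : ℕ, if (k : ℝ≥0∞) < τ then u k else 0

/-- The exponential function on `[0,∞]`, with `exp ∞ = ∞`. -/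
noncomputable def expE (y : ℝ≥0∞) : ℝ≥0∞ :=
  if y = ⊤ then ⊤ else ENNReal.ofReal (Real.exp y.toReal)

/-- The exponential Orlicz norm `‖Y‖_{ψ_α,Q}` of a `[0,∞]`-valued variable
(with `inf ∅ = ∞`). -/
noncomputable def psiNormE {Ω : Type*} [MeasurableSpace Ω] (Q : Measure Ω) (α : ℝ)
    (Y : Ω → ℝ≥0∞) : ℝ≥0∞ :=
  sInf {c : ℝ≥0∞ | ∃ r : ℝ, 0 < r ∧ c = ENNReal.ofReal r ∧
    ∫⁻ ω, expE (Y ω ^ α / ENNReal.ofReal (r ^ α)) ∂Q ≤ 2}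

set_option linter.unusedSectionVars false
namespace Stmt17Aux

variable {𝒳 : Type*} [MeasurableSpace 𝒳]

lemma measurable_prependPath (x : 𝒳) : Measurable (prependPath x) := by
  apply measurable_pi_lambda
  intro n
  cases n with
  | zero => exact measurable_const
  | succ k => exact measurable_pi_apply k

lemma measurable_expE : Measurable expE := by
  unfold expE
  exact Measurable.ite (measurableSet_singleton ⊤) measurable_const
    (ENNReal.measurable_ofReal.comp (Real.measurable_exp.comp ENNReal.measurable_toReal))

lemma expE_ofReal {y : ℝ} (hy : 0 ≤ y) : expE (ENNReal.ofReal y) = ENNReal.ofReal (Real.exp y) := by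
  rw [expE, if_neg ENNReal.ofReal_ne_top, ENNReal.toReal_ofReal hy]

lemma expE_top : expE ⊤ = ⊤ := if_pos rfl

/-- `τ > k` iff no return in the first `k` skeleton steps. -/
lemma lt_pathTau_iff {m k : ℕ} {C : Set 𝒳} {ω : ℕ → 𝒳} :
    (k : ℝ≥0∞) < pathTau m C ω ↔ ∀ j : ℕ, 1 ≤ j → j ≤ k → ω (j * m) ∉ C := by
  constructor
  · intro hlt j h1 hk hmem
    have hj : (j : ℝ≥0∞) ∈ {c : ℝ≥0∞ | ∃ j : ℕ, c = j ∧ 1 ≤ j ∧ ω (j * m) ∈ C} :=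
      ⟨j, rfl, h1, hmem⟩
    have := sInf_le hj
    have hjk : (j : ℝ≥0∞) ≤ (k : ℝ≥0∞) := by exact_mod_cast hk
    exact absurd hlt (not_lt.mpr (this.trans hjk))
  · intro hno
    have : ((k + 1 : ℕ) : ℝ≥0∞) ≤ pathTau m C ω := by
      apply le_sInf
      rintro c ⟨j, rfl, h1, hmem⟩
      have hj : k + 1 ≤ j := by
        by_contra hlt
        exact hno j h1 (by omega) hmem
      exact_mod_cast hj
    calc (k : ℝ≥0∞) < ((k+1 : ℕ) : ℝ≥0∞) := by exact_mod_cast Nat.lt_succ_self k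
    _ ≤ _ := this

lemma one_le_pathTau {m : ℕ} {C : Set 𝒳} {ω : ℕ → 𝒳} : 1 ≤ pathTau m C ω := by
  apply le_sInf
  rintro c ⟨j, rfl, h1, -⟩
  exact_mod_cast h1

lemma pathTau_eq_coe_of_ne_top {m : ℕ} {C : Set 𝒳} {ω : ℕ → 𝒳}
    (hne : pathTau m C ω ≠ ⊤) : ∃ n : ℕ, 1 ≤ n ∧ pathTau m C ω = n := by
  set A : Set ℕ := {j : ℕ | 1 ≤ j ∧ ω (j * m) ∈ C} with hA
  have hAne : A.Nonempty := by
    by_contra hemp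
    apply hne
    have hst : {c : ℝ≥0∞ | ∃ j : ℕ, c = j ∧ 1 ≤ j ∧ ω (j * m) ∈ C} = ∅ := by
      ext c
      simp only [Set.mem_setOf_eq, Set.mem_empty_iff_false, iff_false]
      rintro ⟨j, rfl, h1, hmem⟩
      exact hemp ⟨j, h1, hmem⟩
    rw [pathTau, hst]
    exact sInf_empty
  refine ⟨sInf A, (Nat.sInf_mem hAne).1, ?_⟩
  apply le_antisymm
  · exact sInf_le ⟨sInf A, rfl, (Nat.sInf_mem hAne).1, (Nat.sInf_mem hAne).2⟩
  · apply le_sInf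
    rintro c ⟨j, rfl, h1, hmem⟩
    have := Nat.sInf_le (show j ∈ A from ⟨h1, hmem⟩)
    exact_mod_cast this

lemma sumBefore_coe (n : ℕ) (u : ℕ → ℝ≥0∞) :
    sumBefore (n : ℝ≥0∞) u = ∑ k ∈ Finset.range n, u k := by
  rw [sumBefore, tsum_eq_sum (s := Finset.range n)]
  · apply Finset.sum_congr rfl
    intro k hk
    rw [if_pos]
    exact_mod_cast Finset.mem_range.mp hk
  · intro k hk
    rw [if_neg]
    simp only [not_lt]
    exact_mod_cast Nat.not_lt.mp (fun h => hk (Finset.mem_range.mpr h))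


section Markov

variable (κ : Kernel 𝒳 𝒳) [IsMarkovKernel κ]
  (Pa : 𝒳 → Measure (ℕ → 𝒳)) [∀ x, IsProbabilityMeasure (Pa x)]
  (hPa_meas : Measurable Pa)
  (hPa : ∀ x, Pa x = (κ x).bind fun y => (Pa y).map (prependPath x))

include hPa_meas hPa

lemma lintegral_step {F : (ℕ → 𝒳) → ℝ≥0∞} (hF : Measurable F) (x : 𝒳) :
    ∫⁻ ω, F ω ∂Pa x = ∫⁻ y, ∫⁻ ω, F (prependPath x ω) ∂Pa y ∂κ x := by
  rw [hPa x, Measure.lintegral_bind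
    (show Measurable fun y => (Pa y).map (prependPath x) from
      (Measure.measurable_map _ (measurable_prependPath x)).comp hPa_meas).aemeasurable hF.aemeasurable]
  exact lintegral_congr fun y => lintegral_map hF (measurable_prependPath x)

omit hPa in
lemma measurable_PaInt {G : (ℕ → 𝒳) → ℝ≥0∞} (hG : Measurable G) :
    Measurable fun y => ∫⁻ ω, G ω ∂Pa y :=
  (Measure.measurable_lintegral hG).comp hPa_meas

lemma lintegral_coord_zero {g : 𝒳 → ℝ≥0∞} (hg : Measurable g) (x : 𝒳) :
    ∫⁻ ω, g (ω 0) ∂Pa x = g x := by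
  rw [lintegral_step κ Pa hPa_meas hPa (F := fun ω => g (ω 0))
    (hg.comp (measurable_pi_apply 0)) x]
  have : ∀ y : 𝒳, ∫⁻ ω, g (prependPath x ω 0) ∂Pa y = g x := by
    intro y
    simp only [show ∀ ω : ℕ → 𝒳, prependPath x ω 0 = x from fun _ => rfl]
    simp [lintegral_const]
  rw [lintegral_congr this]
  simp [lintegral_const]

/-- The Markov property at deterministic times. -/
lemma markov : ∀ (N : ℕ) (F : (ℕ → 𝒳) → ℝ≥0∞), Measurable F →
    (∀ ω ω' : ℕ → 𝒳, (∀ i ≤ N, ω i = ω' i) → F ω = F ω') →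
    ∀ (G : (ℕ → 𝒳) → ℝ≥0∞), Measurable G → ∀ x : 𝒳,
    ∫⁻ ω, F ω * G (fun i => ω (N + i)) ∂Pa x
      = ∫⁻ ω, F ω * ∫⁻ ω', G ω' ∂Pa (ω N) ∂Pa x := by
  intro N
  induction N with
  | zero =>
    intro F hF hF0 G hG x
    have hGshift : ∀ ω : ℕ → 𝒳, G (fun i => ω (0 + i)) = G ω := by
      intro ω; congr 1; funext i; rw [Nat.zero_add]
    have hFx : ∀ ω : ℕ → 𝒳, F (prependPath x ω) = F (fun _ => x) := by
      intro ω
      apply hF0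
      intro i hi
      interval_cases i
      rfl
    have hPG : Measurable fun y : 𝒳 => ∫⁻ ω', G ω' ∂Pa y :=
      measurable_PaInt Pa hPa_meas hG
    -- LHS
    rw [lintegral_congr fun ω => by rw [hGshift ω]]
    rw [lintegral_step κ Pa hPa_meas hPa (F := fun ω => F ω * G ω) (hF.mul hG) x]
    have hL : ∀ y : 𝒳, ∫⁻ ω, F (prependPath x ω) * G (prependPath x ω) ∂Pa y
        = F (fun _ => x) * ∫⁻ ω, G (prependPath x ω) ∂Pa y := by
      intro y
      rw [← lintegral_const_mul _ (show Measurable fun ω => G (prependPath x ω) from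
        hG.comp (measurable_prependPath x))]
      exact lintegral_congr fun ω => by rw [hFx ω]
    rw [lintegral_congr hL, lintegral_const_mul _ (show Measurable fun y =>
      ∫⁻ ω, G (prependPath x ω) ∂Pa y from
      measurable_PaInt Pa hPa_meas (hG.comp (measurable_prependPath x)))]
    -- RHS
    rw [lintegral_step κ Pa hPa_meas hPa
      (F := fun ω => F ω * ∫⁻ ω', G ω' ∂Pa (ω 0))
      (hF.mul (hPG.comp (measurable_pi_apply 0))) x]
    have hR : ∀ y : 𝒳, ∫⁻ ω, F (prependPath x ω) * (∫⁻ ω', G ω' ∂Pa (prependPath x ω 0)) ∂Pa y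
        = F (fun _ => x) * ∫⁻ ω', G ω' ∂Pa x := by
      intro y
      have : ∀ ω : ℕ → 𝒳, F (prependPath x ω) * (∫⁻ ω', G ω' ∂Pa (prependPath x ω 0))
          = F (fun _ => x) * ∫⁻ ω', G ω' ∂Pa x := by
        intro ω; rw [hFx ω]; rfl
      rw [lintegral_congr this]
      simp [lintegral_const]
    rw [lintegral_congr hR]
    simp only [lintegral_const, measure_univ, mul_one]
    rw [← lintegral_step κ Pa hPa_meas hPa hG x]
  | succ N ih =>
    intro F hF hF0 G hG x
    have hPG : Measurable fun y : 𝒳 => ∫⁻ ω', G ω' ∂Pa y :=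
      measurable_PaInt Pa hPa_meas hG
    have hshift : Measurable fun (ω : ℕ → 𝒳) (i : ℕ) => ω (N + 1 + i) :=
      measurable_pi_lambda _ fun i => measurable_pi_apply _
    have hshiftEq : ∀ ω' : ℕ → 𝒳, (fun i => prependPath x ω' (N + 1 + i)) = fun i => ω' (N + i) := by
      intro ω'; funext i
      have : N + 1 + i = (N + i) + 1 := by omega
      rw [this]; rfl
    -- LHS via step
    rw [lintegral_step κ Pa hPa_meas hPa
      (F := fun ω => F ω * G fun i => ω (N + 1 + i))
      (hF.mul (hG.comp hshift)) x]
    have hFprep : Measurable fun ω' => F (prependPath x ω') := hF.comp (measurable_prependPath x)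
    have hFprep0 : ∀ ω' ω'' : ℕ → 𝒳, (∀ i ≤ N, ω' i = ω'' i) →
        F (prependPath x ω') = F (prependPath x ω'') := by
      intro ω' ω'' hag
      apply hF0
      intro i hi
      cases i with
      | zero => rfl
      | succ j => exact hag j (by omega)
    have hL : ∀ y : 𝒳,
        ∫⁻ ω', F (prependPath x ω') * G (fun i => prependPath x ω' (N + 1 + i)) ∂Pa y
        = ∫⁻ ω', F (prependPath x ω') * (∫⁻ ω'', G ω'' ∂Pa (ω' N)) ∂Pa y := by
      intro y
      rw [lintegral_congr fun ω' => by rw [hshiftEq ω']]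
      exact ih _ hFprep hFprep0 G hG y
    rw [lintegral_congr hL]
    have hback : ∀ ω' : ℕ → 𝒳,
        F (prependPath x ω') * (∫⁻ ω'', G ω'' ∂Pa (ω' N))
        = (fun ω => F ω * ∫⁻ ω'', G ω'' ∂Pa (ω (N + 1))) (prependPath x ω') := by
      intro ω'; rfl
    rw [lintegral_congr fun y => lintegral_congr fun ω' => hback ω']
    rw [← lintegral_step κ Pa hPa_meas hPa
      (F := fun ω => F ω * ∫⁻ ω', G ω' ∂Pa (ω (N + 1)))
      (hF.mul (hPG.comp (measurable_pi_apply (N + 1)))) x]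

end Markov

open Classical in
/-- Indicator of the event `τ_C > k` (no return to `C` among skeleton times `1..k`). -/
noncomputable def notHit (m k : ℕ) (C : Set 𝒳) (ω : ℕ → 𝒳) : ℝ≥0∞ :=
  if ∀ j : ℕ, 1 ≤ j → j ≤ k → ω (j * m) ∉ C then 1 else 0

lemma notHit_eq_ite {m k : ℕ} {C : Set 𝒳} (ω : ℕ → 𝒳) :
    notHit m k C ω = if (k : ℝ≥0∞) < pathTau m C ω then 1 else 0 := by
  classical
  rw [notHit]
  by_cases hcond : ∀ j : ℕ, 1 ≤ j → j ≤ k → ω (j * m) ∉ C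
  · rw [if_pos hcond, if_pos (lt_pathTau_iff.mpr hcond)]
  · rw [if_neg hcond, if_neg (fun hlt => hcond (lt_pathTau_iff.mp hlt))]

lemma notHit_zero {m : ℕ} {C : Set 𝒳} (ω : ℕ → 𝒳) : notHit m 0 C ω = 1 := by
  rw [notHit, if_pos]
  intro j h1 h0
  omega

lemma notHit_le_one {m k : ℕ} {C : Set 𝒳} (ω : ℕ → 𝒳) : notHit m k C ω ≤ 1 := by
  rw [notHit]; split <;> simp

lemma notHit_antitone {m k : ℕ} {C : Set 𝒳} (ω : ℕ → 𝒳) :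
    notHit m (k + 1) C ω ≤ notHit m k C ω := by
  rw [notHit, notHit]
  split
  · rename_i hcond
    rw [if_pos (fun j h1 hk => hcond j h1 (by omega))]
  · simp

lemma measurable_notHit {m k : ℕ} {C : Set 𝒳} (hC : MeasurableSet C) :
    Measurable (notHit m k C) := by
  classical
  have hset : MeasurableSet {ω : ℕ → 𝒳 | ∀ j : ℕ, 1 ≤ j → j ≤ k → ω (j * m) ∉ C} := by
    have : {ω : ℕ → 𝒳 | ∀ j : ℕ, 1 ≤ j → j ≤ k → ω (j * m) ∉ C}
        = ⋂ (j : ℕ) (_ : 1 ≤ j) (_ : j ≤ k), (fun ω : ℕ → 𝒳 => ω (j * m)) ⁻¹' Cᶜ := by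
      ext ω; simp [Set.mem_iInter]
    rw [this]
    exact MeasurableSet.iInter fun j => MeasurableSet.iInter fun _ =>
      MeasurableSet.iInter fun _ => (measurable_pi_apply (j * m)) hC.compl
  exact Measurable.ite hset measurable_const measurable_const

lemma one_le_expGk {γ c : ℝ} (z : ℝ) (hγ : 0 < γ) (hc : 0 < c) :
    (1 : ℝ) ≤ Real.exp (|z| ^ γ / c ^ γ) := by
  rw [show (1 : ℝ) = Real.exp 0 from (Real.exp_zero).symm]
  apply Real.exp_le_exp.mpr
  positivity

lemma measurable_pathZ {m k : ℕ} {f : 𝒳 → ℝ} (hf : Measurable f) :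
    Measurable (pathZ m f k) := by
  unfold pathZ
  exact Finset.measurable_sum _ fun j _ => hf.comp (measurable_pi_apply _)

lemma measurable_pathTau {m : ℕ} {C : Set 𝒳} (hC : MeasurableSet C) :
    Measurable (pathTau m C) := by
  have heq : pathTau m C = fun ω => ∑' k : ℕ, notHit m k C ω := by
    funext ω
    by_cases htop : pathTau m C ω = ⊤
    · rw [htop]
      have : ∀ k : ℕ, notHit m k C ω = 1 := by
        intro k
        rw [notHit_eq_ite, if_pos (htop ▸ ENNReal.natCast_lt_top k : (k : ℝ≥0∞) < pathTau m C ω)]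
      rw [tsum_congr fun k => this k]
      exact (ENNReal.tsum_const_eq_top_of_ne_zero one_ne_zero).symm
    · obtain ⟨n, hn1, hn⟩ := pathTau_eq_coe_of_ne_top htop
      rw [hn]
      have : ∀ k : ℕ, notHit m k C ω = if k < n then 1 else 0 := by
        intro k
        rw [notHit_eq_ite, hn]
        congr 1
        simp only [eq_iff_iff]
        exact_mod_cast Iff.rfl
      rw [tsum_congr this, tsum_eq_sum (s := Finset.range n)
        (fun k hk => if_neg (by simpa using fun h => hk (Finset.mem_range.mpr h)))]
      rw [Finset.sum_congr rfl fun k hk => if_pos (Finset.mem_range.mp hk)]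
      simp
  rw [heq]
  exact Measurable.ennreal_tsum fun k => measurable_notHit hC

section Drift

variable (κ : Kernel 𝒳 𝒳) [IsMarkovKernel κ]
  (Pa : 𝒳 → Measure (ℕ → 𝒳)) [∀ x, IsProbabilityMeasure (Pa x)]
  (hPa_meas : Measurable Pa)
  (hPa : ∀ x, Pa x = (κ x).bind fun y => (Pa y).map (prependPath x))
  (m : ℕ) (f : 𝒳 → ℝ) (hf : Measurable f) (γ c : ℝ) (hγ : 0 < γ) (hc : 0 < c)
  (h : 𝒳 → ℝ) (hhm : Measurable h)
  (hh : ∀ x, ∫⁻ ω, ENNReal.ofReal (Real.exp (|pathZ m f 0 ω| ^ γ / c ^ γ)) ∂(Pa x)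
      = ENNReal.ofReal (Real.exp (h x)))
  (V : 𝒳 → ℝ) (hVm : Measurable V) (hV0 : ∀ x, 0 ≤ V x)
  (C : Set 𝒳) (hC : MeasurableSet C)
  (b K : ℝ) (hb : 0 < b) (hK : 0 < K) (hVK : ∀ x ∈ C, V x ≤ K)
  (hdrift : ∀ x, (∫⁻ ω, ENNReal.ofReal (V (ω m)) ∂(Pa x)) +
        ENNReal.ofReal (Real.exp (h x))
      ≤ ENNReal.ofReal (V x + b * Set.indicator C (fun _ => 1) x))

/-- The `k`-th block integrand `e^{g(Z_k)}`. -/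
noncomputable def Gk (m : ℕ) (f : 𝒳 → ℝ) (γ c : ℝ) (k : ℕ) (ω : ℕ → 𝒳) : ℝ≥0∞ :=
  ENNReal.ofReal (Real.exp (|pathZ m f k ω| ^ γ / c ^ γ))

lemma measurable_Gk {m : ℕ} {f : 𝒳 → ℝ} (hf : Measurable f) (γ c : ℝ) (k : ℕ) :
    Measurable (Gk m f γ c k) := by
  unfold Gk
  exact ENNReal.measurable_ofReal.comp (Real.measurable_exp.comp
    ((((measurable_pathZ hf).abs.pow measurable_const).div_const _)))

include hPa_meas hPa hf hC hhm hh in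
/-- Conditioning the `k`-th block on the skeleton position `X_{km}`. -/
lemma block_condition (k : ℕ) (x : 𝒳) :
    ∫⁻ ω, notHit m k C ω * Gk m f γ c k ω ∂Pa x
      = ∫⁻ ω, notHit m k C ω * ENNReal.ofReal (Real.exp (h (ω (k * m)))) ∂Pa x := by
  have hGshift : ∀ ω : ℕ → 𝒳,
      Gk m f γ c k ω = Gk m f γ c 0 (fun i => ω (k * m + i)) := by
    intro ω
    unfold Gk pathZ
    simp [Nat.zero_mul, Nat.zero_add]
  have hdep : ∀ ω ω' : ℕ → 𝒳, (∀ i ≤ k * m, ω i = ω' i) → notHit m k C ω = notHit m k C ω' := by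
    intro ω ω' hag
    unfold notHit
    congr 1
    simp only [eq_iff_iff]
    constructor <;> intro hcond j h1 hk <;>
      [rw [← hag (j * m) (Nat.mul_le_mul_right m hk)];
       rw [hag (j * m) (Nat.mul_le_mul_right m hk)]] <;> exact hcond j h1 hk
  rw [lintegral_congr fun ω => by rw [hGshift ω]]
  rw [markov κ Pa hPa_meas hPa (k * m) (notHit m k C) (measurable_notHit hC) hdep
    (Gk m f γ c 0) (measurable_Gk hf γ c 0) x]
  exact lintegral_congr fun ω => by rw [show ∫⁻ ω', Gk m f γ c 0 ω' ∂Pa (ω (k * m))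
    = ENNReal.ofReal (Real.exp (h (ω (k * m)))) from hh (ω (k * m))]

include hPa_meas hPa hVm hC hhm hb hdrift in
/-- Foster–Lyapunov comparison along the stopped skeleton. -/
lemma comparison (x : 𝒳) : ∀ n : ℕ,
    (∑ k ∈ Finset.range n, ∫⁻ ω, notHit m k C ω * ENNReal.ofReal (Real.exp (h (ω (k * m)))) ∂Pa x)
      + ∫⁻ ω, notHit m n C ω * ENNReal.ofReal (V (ω (n * m))) ∂Pa x
    ≤ ENNReal.ofReal (V x + b * Set.indicator C (fun _ => 1) x) := by
  have hPmV : Measurable fun y => ∫⁻ ω, ENNReal.ofReal (V (ω m)) ∂Pa y :=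
    measurable_PaInt Pa hPa_meas (ENNReal.measurable_ofReal.comp (hVm.comp (measurable_pi_apply m)))
  have hind : ∀ y : 𝒳, 0 ≤ b * Set.indicator C (fun _ => 1) y := by
    intro y
    apply mul_nonneg hb.le
    exact Set.indicator_nonneg (fun _ _ => zero_le_one) y
  have hdep : ∀ (n : ℕ) (ω ω' : ℕ → 𝒳), (∀ i ≤ n * m, ω i = ω' i) →
      notHit m n C ω = notHit m n C ω' := by
    intro n ω ω' hag
    unfold notHit
    congr 1
    simp only [eq_iff_iff]
    constructor <;> intro hcond j h1 hk <;>
      [rw [← hag (j * m) (Nat.mul_le_mul_right m hk)];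
       rw [hag (j * m) (Nat.mul_le_mul_right m hk)]] <;> exact hcond j h1 hk
  intro n
  induction n with
  | zero =>
    simp only [Finset.range_zero, Finset.sum_empty, zero_add, Nat.zero_mul]
    rw [lintegral_congr fun ω => by rw [notHit_zero ω, one_mul]]
    rw [lintegral_coord_zero κ Pa hPa_meas hPa (g := fun y => ENNReal.ofReal (V y))
      (ENNReal.measurable_ofReal.comp hVm) x]
    exact ENNReal.ofReal_le_ofReal (le_add_of_nonneg_right (hind x))
  | succ n ih =>
    rw [Finset.sum_range_succ]
    -- replace the new V-term by the conditioned one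
    have step1 : ∫⁻ ω, notHit m (n+1) C ω * ENNReal.ofReal (V (ω ((n+1) * m))) ∂Pa x
        ≤ ∫⁻ ω, notHit m n C ω * (∫⁻ ω', ENNReal.ofReal (V (ω' m)) ∂Pa (ω (n * m))) ∂Pa x := by
      refine le_trans (lintegral_mono fun ω => mul_le_mul_left (notHit_antitone ω) _) ?_
      have hGsh : ∀ ω : ℕ → 𝒳,
          ENNReal.ofReal (V (ω ((n+1) * m))) =
            (fun ω' => ENNReal.ofReal (V (ω' m))) (fun i => ω (n * m + i)) := by
        intro ω
        show ENNReal.ofReal (V (ω ((n+1) * m))) = ENNReal.ofReal (V (ω (n * m + m)))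
        rw [add_one_mul]
      rw [lintegral_congr fun ω => by rw [hGsh ω]]
      rw [markov κ Pa hPa_meas hPa (n * m) (notHit m n C) (measurable_notHit hC) (hdep n)
        (fun ω' => ENNReal.ofReal (V (ω' m)))
        (ENNReal.measurable_ofReal.comp (hVm.comp (measurable_pi_apply m))) x]
    have step2 :
        (∫⁻ ω, notHit m n C ω * ENNReal.ofReal (Real.exp (h (ω (n * m)))) ∂Pa x)
        + ∫⁻ ω, notHit m n C ω * (∫⁻ ω', ENNReal.ofReal (V (ω' m)) ∂Pa (ω (n * m))) ∂Pa x
        ≤ ∫⁻ ω, notHit m n C ω *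
            ENNReal.ofReal (V (ω (n * m)) + b * Set.indicator C (fun _ => 1) (ω (n * m))) ∂Pa x := by
      have hadd : (∫⁻ ω, notHit m n C ω * ENNReal.ofReal (Real.exp (h (ω (n * m)))) ∂Pa x)
          + ∫⁻ ω, notHit m n C ω * (∫⁻ ω', ENNReal.ofReal (V (ω' m)) ∂Pa (ω (n * m))) ∂Pa x
          = ∫⁻ ω, notHit m n C ω * ENNReal.ofReal (Real.exp (h (ω (n * m))))
              + notHit m n C ω * (∫⁻ ω', ENNReal.ofReal (V (ω' m)) ∂Pa (ω (n * m))) ∂Pa x :=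
        by
          have hmeas1 : Measurable fun ω : ℕ → 𝒳 =>
              notHit m n C ω * ENNReal.ofReal (Real.exp (h (ω (n * m)))) :=
            (measurable_notHit hC).mul (ENNReal.measurable_ofReal.comp
              (Real.measurable_exp.comp (hhm.comp (measurable_pi_apply (n * m)))))
          exact (lintegral_add_left hmeas1 _).symm
      rw [hadd]
      apply lintegral_mono
      intro ω
      beta_reduce
      rw [← mul_add]
      apply mul_le_mul_right
      rw [add_comm]
      exact hdrift (ω (n * m))
    -- combine
    calc (∑ k ∈ Finset.range n, ∫⁻ ω, notHit m k C ω * ENNReal.ofReal (Real.exp (h (ω (k * m)))) ∂Pa x)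
          + (∫⁻ ω, notHit m n C ω * ENNReal.ofReal (Real.exp (h (ω (n * m)))) ∂Pa x)
          + ∫⁻ ω, notHit m (n+1) C ω * ENNReal.ofReal (V (ω ((n+1) * m))) ∂Pa x
        ≤ (∑ k ∈ Finset.range n, ∫⁻ ω, notHit m k C ω * ENNReal.ofReal (Real.exp (h (ω (k * m)))) ∂Pa x)
          + ((∫⁻ ω, notHit m n C ω * ENNReal.ofReal (Real.exp (h (ω (n * m)))) ∂Pa x)
            + ∫⁻ ω, notHit m n C ω * (∫⁻ ω', ENNReal.ofReal (V (ω' m)) ∂Pa (ω (n * m))) ∂Pa x) := by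
          rw [add_assoc]
          exact add_le_add_right (add_le_add_right step1 _) _
      _ ≤ (∑ k ∈ Finset.range n, ∫⁻ ω, notHit m k C ω * ENNReal.ofReal (Real.exp (h (ω (k * m)))) ∂Pa x)
          + ∫⁻ ω, notHit m n C ω *
              ENNReal.ofReal (V (ω (n * m)) + b * Set.indicator C (fun _ => 1) (ω (n * m))) ∂Pa x :=
          add_le_add_right step2 _
      _ ≤ ENNReal.ofReal (V x + b * Set.indicator C (fun _ => 1) x) := by
          rcases Nat.eq_zero_or_pos n with hn0 | hn1
          · subst hn0
            simp only [Finset.range_zero, Finset.sum_empty, zero_add, Nat.zero_mul]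
            rw [lintegral_congr fun ω => by rw [notHit_zero ω, one_mul]]
            rw [lintegral_coord_zero κ Pa hPa_meas hPa
              (g := fun y => ENNReal.ofReal (V y + b * Set.indicator C (fun _ => 1) y))
              (by exact ENNReal.measurable_ofReal.comp (hVm.add
                (measurable_const.mul (measurable_one.indicator hC)))) x]
          · refine le_trans ?_ ih
            apply add_le_add_right
            apply lintegral_mono
            intro ω
            beta_reduce
            unfold notHit
            split
            · rename_i hcond
              rw [one_mul, one_mul]
              have hnot : ω (n * m) ∉ C := hcond n hn1 le_rfl
              rw [Set.indicator_of_notMem hnot]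
              simp
            · simp

include hPa_meas hPa hf hC hhm hh hVm hb hK hVK hdrift in
/-- Integrated bound on the sum of block exponentials before return. -/
lemma T_bound (x : 𝒳) (hx : x ∈ C) :
    ∫⁻ ω, (∑' k : ℕ, notHit m k C ω * Gk m f γ c k ω) ∂Pa x ≤ ENNReal.ofReal (K + b) := by
  rw [lintegral_tsum (f := fun k ω => notHit m k C ω * Gk m f γ c k ω) fun k => ((measurable_notHit hC).mul (measurable_Gk hf γ c k)).aemeasurable]
  rw [tsum_congr fun k => block_condition κ Pa hPa_meas hPa m f hf γ c h hhm hh C hC k x]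
  rw [ENNReal.tsum_eq_iSup_nat]
  apply iSup_le
  intro n
  calc (∑ k ∈ Finset.range n,
        ∫⁻ ω, notHit m k C ω * ENNReal.ofReal (Real.exp (h (ω (k * m)))) ∂Pa x)
      ≤ (∑ k ∈ Finset.range n,
        ∫⁻ ω, notHit m k C ω * ENNReal.ofReal (Real.exp (h (ω (k * m)))) ∂Pa x)
        + ∫⁻ ω, notHit m n C ω * ENNReal.ofReal (V (ω (n * m))) ∂Pa x := le_self_add
    _ ≤ ENNReal.ofReal (V x + b * Set.indicator C (fun _ => 1) x) :=
        comparison κ Pa hPa_meas hPa m h hhm V hVm C hC b hb hdrift x n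
    _ ≤ ENNReal.ofReal (K + b) := by
        apply ENNReal.ofReal_le_ofReal
        rw [Set.indicator_of_mem hx, mul_one]
        exact add_le_add (hVK x hx) le_rfl

end Drift

/-- The key pointwise real inequality combining Hölder's bound `S ≤ n·W` with
Young's inequality for conjugate exponents `β/α`, `γ/α`. -/
lemma real_key {α β γ c M r₁ : ℝ} (hα : 0 < α) (hβ : α < β) (hγpos : 0 < γ)
    (hsum : α / β + α / γ = 1) (hc : 0 < c) (hM : 1 ≤ M) (hr₁ : 0 < r₁)
    (n : ℕ) (hn : 1 ≤ n) (Z : ℕ → ℝ) :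
    Real.exp ((∑ k ∈ Finset.range n, |Z k|) ^ α / (r₁ * (c * M ^ (1/γ))) ^ α)
      ≤ Real.exp ((n : ℝ) ^ β / r₁ ^ β) ^ (α/β)
        * (∑ k ∈ Finset.range n, Real.exp (|Z k| ^ γ / c ^ γ)) ^ (α/(γ*M)) := by
  have hβ0 : 0 < β := hα.trans hβ
  have hM0 : 0 < M := lt_of_lt_of_le zero_lt_one hM
  have hMγ : 0 < M ^ (1/γ) := Real.rpow_pos_of_pos hM0 _
  have hcM : 0 < c * M ^ (1/γ) := mul_pos hc hMγ
  have hr : 0 < r₁ * (c * M ^ (1/γ)) := mul_pos hr₁ hcM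
  set T := ∑ k ∈ Finset.range n, Real.exp (|Z k| ^ γ / c ^ γ) with hT
  have hne : (Finset.range n).Nonempty := ⟨0, Finset.mem_range.mpr hn⟩
  obtain ⟨j, hjmem, hjmax⟩ := Finset.exists_max_image (Finset.range n) (fun k => |Z k|) hne
  set W := |Z j| with hW
  have hW0 : 0 ≤ W := abs_nonneg _
  have hT0 : 0 < T := Finset.sum_pos (fun k _ => Real.exp_pos _) hne
  have hS0 : 0 ≤ ∑ k ∈ Finset.range n, |Z k| := Finset.sum_nonneg fun k _ => abs_nonneg _
  have hSnW : (∑ k ∈ Finset.range n, |Z k|) ≤ (n : ℝ) * W := by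
    have := Finset.sum_le_card_nsmul (Finset.range n) (fun k => |Z k|) W
      (fun k hk => hjmax k hk)
    simpa [Finset.card_range, nsmul_eq_mul] using this
  have hlogT : W ^ γ / c ^ γ ≤ Real.log T := by
    have hle : Real.exp (W ^ γ / c ^ γ) ≤ T := by
      rw [hW]
      exact Finset.single_le_sum (f := fun k => Real.exp (|Z k| ^ γ / c ^ γ))
        (fun k _ => (Real.exp_pos _).le) hjmem
    calc W ^ γ / c ^ γ = Real.log (Real.exp (W ^ γ / c ^ γ)) := (Real.log_exp _).symm
      _ ≤ Real.log T := Real.log_le_log (Real.exp_pos _) hle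
  have hconj : (β/α).HolderConjugate (γ/α) := by
    rw [Real.holderConjugate_iff]
    constructor
    · exact (one_lt_div hα).mpr hβ
    · rw [inv_div, inv_div]
      exact hsum
  have hyoung := Real.young_inequality_of_nonneg
    (Real.rpow_nonneg (by positivity : (0:ℝ) ≤ (n : ℝ) / r₁) α)
    (Real.rpow_nonneg (by positivity : (0:ℝ) ≤ W / (c * M ^ (1/γ))) α) hconj
  have hupow : (((n : ℝ) / r₁) ^ α) ^ (β/α) = ((n : ℝ) / r₁) ^ β := by
    rw [← Real.rpow_mul (by positivity)]
    congr 1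
    field_simp
  have hvpow : ((W / (c * M ^ (1/γ))) ^ α) ^ (γ/α) = (W / (c * M ^ (1/γ))) ^ γ := by
    rw [← Real.rpow_mul (by positivity)]
    congr 1
    field_simp
  have hvval : (W / (c * M ^ (1/γ))) ^ γ = W ^ γ / c ^ γ / M := by
    rw [Real.div_rpow hW0 hcM.le, Real.mul_rpow hc.le hMγ.le,
      ← Real.rpow_mul hM0.le, one_div, inv_mul_cancel₀ (ne_of_gt hγpos), Real.rpow_one,
      div_div]
  have hmain : (∑ k ∈ Finset.range n, |Z k|) ^ α / (r₁ * (c * M ^ (1/γ))) ^ α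
      ≤ (n : ℝ) ^ β / r₁ ^ β / (β/α) + Real.log T * (α/(γ*M)) := by
    calc (∑ k ∈ Finset.range n, |Z k|) ^ α / (r₁ * (c * M ^ (1/γ))) ^ α
        = ((∑ k ∈ Finset.range n, |Z k|) / (r₁ * (c * M ^ (1/γ)))) ^ α := by
          rw [Real.div_rpow hS0 hr.le]
      _ ≤ (((n : ℝ) * W) / (r₁ * (c * M ^ (1/γ)))) ^ α := by
          apply Real.rpow_le_rpow (by positivity) _ hα.le
          gcongr
      _ = (((n : ℝ) / r₁) * (W / (c * M ^ (1/γ)))) ^ α := by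
          rw [div_mul_div_comm]
      _ = ((n : ℝ) / r₁) ^ α * (W / (c * M ^ (1/γ))) ^ α := by
          rw [Real.mul_rpow (by positivity) (by positivity)]
      _ ≤ (((n : ℝ) / r₁) ^ α) ^ (β/α) / (β/α)
            + ((W / (c * M ^ (1/γ))) ^ α) ^ (γ/α) / (γ/α) := hyoung
      _ = ((n : ℝ) / r₁) ^ β / (β/α) + (W ^ γ / c ^ γ / M) / (γ/α) := by
          rw [hupow, hvpow, hvval]
      _ ≤ (n : ℝ) ^ β / r₁ ^ β / (β/α) + Real.log T * (α/(γ*M)) := by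
          apply add_le_add
          · rw [Real.div_rpow (Nat.cast_nonneg n) hr₁.le]
          · have hstep : W ^ γ / c ^ γ / M / (γ/α) = W ^ γ / c ^ γ * (α/(γ*M)) := by
              rw [div_div_eq_mul_div, mul_div_assoc, div_mul_div_comm,
                ← mul_div_assoc, mul_comm M γ]
            rw [hstep]
            exact mul_le_mul_of_nonneg_right hlogT (by positivity)
  calc Real.exp ((∑ k ∈ Finset.range n, |Z k|) ^ α / (r₁ * (c * M ^ (1/γ))) ^ α)
      ≤ Real.exp ((n : ℝ) ^ β / r₁ ^ β / (β/α) + Real.log T * (α/(γ*M))) :=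
        Real.exp_le_exp.mpr hmain
    _ = Real.exp ((n : ℝ) ^ β / r₁ ^ β * (α/β)) * Real.exp (Real.log T * (α/(γ*M))) := by
        rw [div_div_eq_mul_div, mul_div_assoc, Real.exp_add]
    _ = Real.exp ((n : ℝ) ^ β / r₁ ^ β) ^ (α/β) * T ^ (α/(γ*M)) := by
        rw [← Real.exp_mul, ← Real.rpow_def_of_pos hT0]

variable {α β γ c M r₁ : ℝ}

/-- Pointwise `ℝ≥0∞` version of the key inequality, valid also on `{τ = ∞}`. -/
lemma pointwise_bound (m : ℕ) (f : 𝒳 → ℝ) (C : Set 𝒳)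
    (hα : 0 < α) (hβ : α < β) (hγpos : 0 < γ) (hsum : α / β + α / γ = 1)
    (hc : 0 < c) (hM : 1 ≤ M) (hr₁ : 0 < r₁) (ω : ℕ → 𝒳) :
    expE ((sumBefore (pathTau m C ω) fun k => ENNReal.ofReal |pathZ m f k ω|) ^ α
        / ENNReal.ofReal ((r₁ * (c * M ^ (1/γ))) ^ α))
      ≤ (expE ((pathTau m C ω) ^ β / ENNReal.ofReal (r₁ ^ β))) ^ (α/β)
        * (∑' k : ℕ, notHit m k C ω * Gk m f γ c k ω) ^ (α/(γ*M)) := by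
  have hβ0 : 0 < β := hα.trans hβ
  have hM0 : 0 < M := lt_of_lt_of_le zero_lt_one hM
  have hγM : 0 < α/(γ*M) := by positivity
  have hT1 : (1 : ℝ≥0∞) ≤ ∑' k : ℕ, notHit m k C ω * Gk m f γ c k ω := by
    refine le_trans ?_ (ENNReal.le_tsum 0)
    rw [notHit_zero, one_mul, Gk]
    rw [show (1 : ℝ≥0∞) = ENNReal.ofReal 1 from ENNReal.ofReal_one.symm]
    exact ENNReal.ofReal_le_ofReal (one_le_expGk _ hγpos hc)
  by_cases htop : pathTau m C ω = ⊤
  · rw [htop, ENNReal.top_rpow_of_pos hβ0, ENNReal.top_div_of_ne_top ENNReal.ofReal_ne_top,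
      expE_top, ENNReal.top_rpow_of_pos (by positivity : (0:ℝ) < α/β)]
    rw [ENNReal.top_mul]
    · exact le_top
    · intro h0
      have h1 : (1 : ℝ≥0∞) ≤ (∑' k : ℕ, notHit m k C ω * Gk m f γ c k ω) ^ (α/(γ*M)) := by
        calc (1:ℝ≥0∞) = 1 ^ (α/(γ*M)) := (ENNReal.one_rpow _).symm
          _ ≤ _ := ENNReal.rpow_le_rpow hT1 hγM.le
      rw [h0] at h1
      exact absurd h1 (by simp)
  · obtain ⟨n, hn1, hτ⟩ := pathTau_eq_coe_of_ne_top htop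
    rw [hτ, sumBefore_coe]
    have hS : (∑ k ∈ Finset.range n, ENNReal.ofReal |pathZ m f k ω|)
        = ENNReal.ofReal (∑ k ∈ Finset.range n, |pathZ m f k ω|) :=
      (ENNReal.ofReal_sum_of_nonneg fun k _ => abs_nonneg _).symm
    have hTeq : (∑' k : ℕ, notHit m k C ω * Gk m f γ c k ω)
        = ENNReal.ofReal (∑ k ∈ Finset.range n, Real.exp (|pathZ m f k ω| ^ γ / c ^ γ)) := by
      rw [ENNReal.ofReal_sum_of_nonneg fun k _ => (Real.exp_pos _).le]
      rw [tsum_eq_sum (s := Finset.range n) (fun k hk => by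
        rw [notHit_eq_ite, hτ, if_neg, zero_mul]
        simp only [not_lt]
        exact_mod_cast Nat.not_lt.mp fun hlt => hk (Finset.mem_range.mpr hlt))]
      apply Finset.sum_congr rfl
      intro k hk
      rw [notHit_eq_ite, hτ, if_pos, one_mul, Gk]
      exact_mod_cast Finset.mem_range.mp hk
    rw [hS, hTeq]
    have hS0 : 0 ≤ ∑ k ∈ Finset.range n, |pathZ m f k ω| :=
      Finset.sum_nonneg fun k _ => abs_nonneg _
    have hr : (0:ℝ) < r₁ * (c * M ^ (1/γ)) := by positivity
    have hrα : (0:ℝ) < (r₁ * (c * M ^ (1/γ))) ^ α := Real.rpow_pos_of_pos hr α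
    have hT0 : (0:ℝ) < ∑ k ∈ Finset.range n, Real.exp (|pathZ m f k ω| ^ γ / c ^ γ) :=
      Finset.sum_pos (fun k _ => Real.exp_pos _) ⟨0, Finset.mem_range.mpr hn1⟩
    rw [ENNReal.ofReal_rpow_of_nonneg hS0 hα.le, ← ENNReal.ofReal_div_of_pos hrα,
      expE_ofReal (by positivity)]
    rw [show ((n:ℝ≥0∞)) = ENNReal.ofReal (n:ℝ) from (ENNReal.ofReal_natCast n).symm]
    rw [ENNReal.ofReal_rpow_of_nonneg (Nat.cast_nonneg n) hβ0.le,
      ← ENNReal.ofReal_div_of_pos (Real.rpow_pos_of_pos hr₁ β),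
      expE_ofReal (by positivity), ENNReal.ofReal_rpow_of_pos (Real.exp_pos _),
      ENNReal.ofReal_rpow_of_pos hT0, ← ENNReal.ofReal_mul (by positivity)]
    exact ENNReal.ofReal_le_ofReal
      (real_key hα hβ hγpos hsum hc hM hr₁ n hn1 (fun k => pathZ m f k ω))

section Core

variable (κ : Kernel 𝒳 𝒳) [IsMarkovKernel κ]
  (Pa : 𝒳 → Measure (ℕ → 𝒳)) [∀ x, IsProbabilityMeasure (Pa x)]
  (hPa_meas : Measurable Pa)
  (hPa : ∀ x, Pa x = (κ x).bind fun y => (Pa y).map (prependPath x))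
  (m : ℕ) (f : 𝒳 → ℝ) (hf : Measurable f)
  (h : 𝒳 → ℝ) (hhm : Measurable h)
  (V : 𝒳 → ℝ) (hVm : Measurable V)
  (C : Set 𝒳) (hC : MeasurableSet C)
  (b K : ℝ) (hb : 0 < b) (hK : 0 < K) (hVK : ∀ x ∈ C, V x ≤ K)

include hPa_meas hPa hf hhm hVm hC hb hK hVK in
lemma core_bound
    (hα : 0 < α) (hβ : α < β) (hγpos : 0 < γ) (hsum : α / β + α / γ = 1)
    (hc : 0 < c) (hM : 1 ≤ M) (hr₁ : 0 < r₁)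
    (hKb2 : (K + b) ^ (1/M) ≤ 2)
    (hh : ∀ x, ∫⁻ ω, ENNReal.ofReal (Real.exp (|pathZ m f 0 ω| ^ γ / c ^ γ)) ∂(Pa x)
        = ENNReal.ofReal (Real.exp (h x)))
    (hdrift : ∀ x, (∫⁻ ω, ENNReal.ofReal (V (ω m)) ∂(Pa x)) +
          ENNReal.ofReal (Real.exp (h x))
        ≤ ENNReal.ofReal (V x + b * Set.indicator C (fun _ => 1) x))
    (x : 𝒳) (hx : x ∈ C)
    (hβint : ∫⁻ ω, expE ((pathTau m C ω) ^ β / ENNReal.ofReal (r₁ ^ β)) ∂Pa x ≤ 2) :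
    ∫⁻ ω, expE ((sumBefore (pathTau m C ω) fun k => ENNReal.ofReal |pathZ m f k ω|) ^ α
        / ENNReal.ofReal ((r₁ * (c * M ^ (1/γ))) ^ α)) ∂Pa x ≤ 2 := by
  have hβ0 : 0 < β := hα.trans hβ
  have hM0 : 0 < M := lt_of_lt_of_le zero_lt_one hM
  have hγ0 : 0 < γ := hγpos
  set F : (ℕ → 𝒳) → ℝ≥0∞ :=
    fun ω => (expE ((pathTau m C ω) ^ β / ENNReal.ofReal (r₁ ^ β))) ^ (α/β) with hF
  set G : (ℕ → 𝒳) → ℝ≥0∞ :=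
    fun ω => (∑' k : ℕ, notHit m k C ω * Gk m f γ c k ω) ^ (α/(γ*M)) with hG
  have hFm : Measurable F :=
    (measurable_expE.comp (((measurable_pathTau hC).pow measurable_const).div_const _)).pow
      measurable_const
  have hTm : Measurable fun ω => ∑' k : ℕ, notHit m k C ω * Gk m f γ c k ω :=
    Measurable.ennreal_tsum fun k => (measurable_notHit hC).mul (measurable_Gk hf γ c k)
  have hGm : Measurable G := hTm.pow measurable_const
  have hconj : (β/α).HolderConjugate (γ/α) := by
    rw [Real.holderConjugate_iff]
    constructor
    · exact (one_lt_div hα).mpr hβ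
    · rw [inv_div, inv_div]
      exact hsum
  have hstep1 : ∫⁻ ω, expE ((sumBefore (pathTau m C ω) fun k =>
        ENNReal.ofReal |pathZ m f k ω|) ^ α
        / ENNReal.ofReal ((r₁ * (c * M ^ (1/γ))) ^ α)) ∂Pa x
      ≤ ∫⁻ ω, (F * G) ω ∂Pa x := by
    apply lintegral_mono
    intro ω
    exact pointwise_bound m f C hα hβ hγpos hsum hc hM hr₁ ω
  have hstep2 : ∫⁻ ω, (F * G) ω ∂Pa x
      ≤ (∫⁻ ω, F ω ^ (β/α) ∂Pa x) ^ (1/(β/α)) * (∫⁻ ω, G ω ^ (γ/α) ∂Pa x) ^ (1/(γ/α)) :=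
    ENNReal.lintegral_mul_le_Lp_mul_Lq (Pa x) hconj hFm.aemeasurable hGm.aemeasurable
  have hFpow : ∀ ω, F ω ^ (β/α) = expE ((pathTau m C ω) ^ β / ENNReal.ofReal (r₁ ^ β)) := by
    intro ω
    rw [hF]
    rw [← ENNReal.rpow_mul]
    rw [show (α/β) * (β/α) = 1 by field_simp]
    exact ENNReal.rpow_one _
  have hGpow : ∀ ω, G ω ^ (γ/α) = (∑' k : ℕ, notHit m k C ω * Gk m f γ c k ω) ^ (1/M) := by
    intro ω
    rw [hG]
    rw [← ENNReal.rpow_mul]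
    congr 1
    field_simp
  have hFint : (∫⁻ ω, F ω ^ (β/α) ∂Pa x) ^ (1/(β/α)) ≤ 2 ^ (α/β) := by
    rw [lintegral_congr hFpow, one_div_div]
    exact ENNReal.rpow_le_rpow hβint (by positivity)
  have hGint : (∫⁻ ω, G ω ^ (γ/α) ∂Pa x) ^ (1/(γ/α)) ≤ 2 ^ (α/γ) := by
    rw [lintegral_congr hGpow, one_div_div]
    have hjensen : ∫⁻ ω, (∑' k : ℕ, notHit m k C ω * Gk m f γ c k ω) ^ (1/M) ∂Pa x
        ≤ (∫⁻ ω, (∑' k : ℕ, notHit m k C ω * Gk m f γ c k ω) ∂Pa x) ^ (1/M) := by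
      rcases eq_or_lt_of_le hM with hM1 | hM1
      · rw [← hM1]
        simp
      · have hconjM : M.HolderConjugate (M.conjExponent) := Real.HolderConjugate.conjExponent hM1
        have hTpm : Measurable fun ω => (∑' k : ℕ, notHit m k C ω * Gk m f γ c k ω) ^ (1/M) :=
          hTm.pow measurable_const
        have hhold := ENNReal.lintegral_mul_le_Lp_mul_Lq (Pa x) hconjM hTpm.aemeasurable
          (aemeasurable_const (μ := Pa x) (b := (1:ℝ≥0∞)))
        simp only [Pi.mul_apply, mul_one] at hhold
        refine le_trans hhold ?_
        have h1 : (∫⁻ _ω, (1:ℝ≥0∞) ^ (M.conjExponent) ∂Pa x) ^ (1/M.conjExponent) = 1 := by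
          simp [ENNReal.one_rpow, lintegral_const]
        rw [h1, mul_one]
        rw [lintegral_congr fun ω => by
          rw [← ENNReal.rpow_mul, show (1/M) * M = 1 by field_simp, ENNReal.rpow_one]]
    calc (∫⁻ ω, (∑' k : ℕ, notHit m k C ω * Gk m f γ c k ω) ^ (1/M) ∂Pa x) ^ (α/γ)
        ≤ ((∫⁻ ω, (∑' k : ℕ, notHit m k C ω * Gk m f γ c k ω) ∂Pa x) ^ (1/M)) ^ (α/γ) :=
          ENNReal.rpow_le_rpow hjensen (by positivity)
      _ ≤ (ENNReal.ofReal (K + b) ^ (1/M)) ^ (α/γ) := by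
          apply ENNReal.rpow_le_rpow _ (by positivity)
          apply ENNReal.rpow_le_rpow _ (by positivity)
          exact T_bound κ Pa hPa_meas hPa m f hf γ c h hhm hh V hVm C hC b K hb hK hVK hdrift x hx
      _ ≤ 2 ^ (α/γ) := by
          apply ENNReal.rpow_le_rpow _ (by positivity)
          rw [ENNReal.ofReal_rpow_of_pos (by positivity)]
          calc ENNReal.ofReal ((K + b) ^ (1/M)) ≤ ENNReal.ofReal 2 :=
                ENNReal.ofReal_le_ofReal hKb2
            _ = 2 := by norm_num
  calc ∫⁻ ω, expE ((sumBefore (pathTau m C ω) fun k =>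
        ENNReal.ofReal |pathZ m f k ω|) ^ α
        / ENNReal.ofReal ((r₁ * (c * M ^ (1/γ))) ^ α)) ∂Pa x
      ≤ (∫⁻ ω, F ω ^ (β/α) ∂Pa x) ^ (1/(β/α)) * (∫⁻ ω, G ω ^ (γ/α) ∂Pa x) ^ (1/(γ/α)) :=
        hstep1.trans hstep2
    _ ≤ 2 ^ (α/β) * 2 ^ (α/γ) := mul_le_mul' hFint hGint
    _ = 2 := by
        rw [← ENNReal.rpow_add _ _ (by norm_num) (by norm_num), hsum, ENNReal.rpow_one]

end Core

end Stmt17Aux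

open Stmt17Aux

/-- Regular drift condition: if `h(x) = log E_x exp(c^{−γ}|Z_0(f)|^γ)` with
`γ = αβ/(β−α)` and `(P^m V)(x) − V(x) ≤ −e^{h(x)} + b 1_C(x)`, `V ≤ K` on `C`, then
`sup_{x∈C} ‖Σ_{k<τ_C} |Z_k(f)|‖_{ψ_α,P_x} ≤ c₁ c₂`, where
`c₁ = sup_{x∈C} ‖τ_C‖_{ψ_β,P_x}` and `c₂ = c (max(log(b+K)/log 2, 1))^{1/γ}`,
the inequality interpreted in `[0,∞]`.  Here `Pa x` is the Ionescu–Tulcea path measure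
of the canonical chain started at `x`, characterized by the recursion `hPa`. -/
theorem stmt_17 {𝒳 : Type*} [MeasurableSpace 𝒳]
    (κ : Kernel 𝒳 𝒳) [IsMarkovKernel κ]
    (Pa : 𝒳 → Measure (ℕ → 𝒳)) [∀ x, IsProbabilityMeasure (Pa x)]
    (hPa_meas : Measurable Pa)
    (hPa : ∀ x, Pa x = (κ x).bind fun y => (Pa y).map (prependPath x))
    (m : ℕ) (hm : 1 ≤ m)
    (f : 𝒳 → ℝ) (hf : Measurable f)
    (α β γ c : ℝ) (hα : 0 < α) (hα1 : α ≤ 1) (hβ : α < β)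
    (hγ : γ = α * β / (β - α)) (hc : 0 < c)
    (h : 𝒳 → ℝ) (hhm : Measurable h)
    (hh : ∀ x, ∫⁻ ω, ENNReal.ofReal (Real.exp (|pathZ m f 0 ω| ^ γ / c ^ γ)) ∂(Pa x)
        = ENNReal.ofReal (Real.exp (h x)))
    (V : 𝒳 → ℝ) (hVm : Measurable V) (hV0 : ∀ x, 0 ≤ V x)
    (C : Set 𝒳) (hC : MeasurableSet C)
    (b K : ℝ) (hb : 0 < b) (hK : 0 < K) (hVK : ∀ x ∈ C, V x ≤ K)
    (hdrift : ∀ x, (∫⁻ ω, ENNReal.ofReal (V (ω m)) ∂(Pa x)) +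
          ENNReal.ofReal (Real.exp (h x))
        ≤ ENNReal.ofReal (V x + b * Set.indicator C (fun _ => 1) x)) :
    (⨆ x ∈ C, psiNormE (Pa x) α
        (fun ω => sumBefore (pathTau m C ω) fun k => ENNReal.ofReal |pathZ m f k ω|))
      ≤ (⨆ x ∈ C, psiNormE (Pa x) β (fun ω => pathTau m C ω)) *
          ENNReal.ofReal (c * (max (Real.log (b + K) / Real.log 2) 1) ^ (1 / γ)) := by
  have hβ0 : 0 < β := hα.trans hβ
  have hβα : 0 < β - α := sub_pos.mpr hβ
  have hγpos : 0 < γ := by rw [hγ]; positivity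
  have hsum : α / β + α / γ = 1 := by
    rw [hγ]
    field_simp
    ring
  set M : ℝ := max (Real.log (b + K) / Real.log 2) 1 with hMdef
  have hM : 1 ≤ M := le_max_right _ _
  have hM0 : 0 < M := lt_of_lt_of_le zero_lt_one hM
  have hc2 : (0:ℝ) < c * M ^ (1/γ) := by positivity
  have hKb2 : (K + b) ^ (1/M) ≤ 2 := by
    have hlog2 : 0 < Real.log 2 := Real.log_pos one_lt_two
    have hKb0 : (0:ℝ) < K + b := by positivity
    have hMlog : Real.log (K + b) ≤ M * Real.log 2 := by
      have h1 : Real.log (b + K) / Real.log 2 ≤ M := le_max_left _ _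
      rw [add_comm b K] at h1
      calc Real.log (K + b) = Real.log (K + b) / Real.log 2 * Real.log 2 := by field_simp
        _ ≤ M * Real.log 2 := mul_le_mul_of_nonneg_right h1 hlog2.le
    rw [Real.rpow_def_of_pos hKb0,
      show (2:ℝ) = Real.exp (Real.log 2) from (Real.exp_log two_pos).symm]
    apply Real.exp_le_exp.mpr
    rw [mul_one_div, div_le_iff₀ hM0]
    linarith [hMlog]
  set c₂E : ℝ≥0∞ := ENNReal.ofReal (c * M ^ (1/γ)) with hc2E
  have hc2E0 : c₂E ≠ 0 := by
    rw [hc2E, Ne, ENNReal.ofReal_eq_zero, not_le]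
    exact hc2
  have hc2Et : c₂E ≠ ⊤ := ENNReal.ofReal_ne_top
  apply iSup₂_le
  intro x hx
  set N : ℝ≥0∞ := ⨆ x ∈ C, psiNormE (Pa x) β fun ω => pathTau m C ω with hNdef
  rcases eq_or_ne N ⊤ with hNt | hNt
  · rw [hNt, ENNReal.top_mul hc2E0]
    exact le_top
  · have hψβ : psiNormE (Pa x) β (fun ω => pathTau m C ω) ≤ N := by
      rw [hNdef]
      exact le_iSup₂ (f := fun x _ => psiNormE (Pa x) β fun ω => pathTau m C ω) x hx
    apply ENNReal.le_of_forall_pos_le_add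
    intro ε hε _hlt
    set δ : ℝ≥0∞ := (ε : ℝ≥0∞) / c₂E with hδ
    have hδ0 : δ ≠ 0 := by
      rw [hδ, Ne, ENNReal.div_eq_zero_iff]
      push_neg
      exact ⟨ENNReal.coe_ne_zero.mpr hε.ne', hc2Et⟩
    have hψβt : psiNormE (Pa x) β (fun ω => pathTau m C ω) ≠ ⊤ :=
      ne_top_of_le_ne_top hNt hψβ
    have hlt2 : psiNormE (Pa x) β (fun ω => pathTau m C ω)
        < psiNormE (Pa x) β (fun ω => pathTau m C ω) + δ :=
      ENNReal.lt_add_right hψβt hδ0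
    have hlt2' : sInf {cc : ℝ≥0∞ | ∃ r : ℝ, 0 < r ∧ cc = ENNReal.ofReal r ∧
        ∫⁻ ω, expE ((pathTau m C ω) ^ β / ENNReal.ofReal (r ^ β)) ∂Pa x ≤ 2}
        < psiNormE (Pa x) β (fun ω => pathTau m C ω) + δ := hlt2
    obtain ⟨s, hsmem, hslt⟩ := sInf_lt_iff.mp hlt2'
    obtain ⟨r₁, hr₁, rfl', hint⟩ := hsmem
    subst rfl'
    have hcore := core_bound κ Pa hPa_meas hPa m f hf h hhm V hVm C hC b K hb hK hVK
      hα hβ hγpos hsum hc hM hr₁ hKb2 hh hdrift x hx hint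
    have hmem : ENNReal.ofReal (r₁ * (c * M ^ (1/γ)))
        ∈ {cc : ℝ≥0∞ | ∃ r : ℝ, 0 < r ∧ cc = ENNReal.ofReal r ∧
          ∫⁻ ω, expE ((sumBefore (pathTau m C ω) fun k =>
            ENNReal.ofReal |pathZ m f k ω|) ^ α / ENNReal.ofReal (r ^ α)) ∂Pa x ≤ 2} :=
      ⟨r₁ * (c * M ^ (1/γ)), by positivity, rfl, hcore⟩
    have hψα_le : psiNormE (Pa x) α
        (fun ω => sumBefore (pathTau m C ω) fun k => ENNReal.ofReal |pathZ m f k ω|)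
        ≤ ENNReal.ofReal (r₁ * (c * M ^ (1/γ))) := by
      exact sInf_le hmem
    calc (psiNormE (Pa x) α
          fun ω => sumBefore (pathTau m C ω) fun k => ENNReal.ofReal |pathZ m f k ω|)
        ≤ ENNReal.ofReal (r₁ * (c * M ^ (1/γ))) := hψα_le
      _ = ENNReal.ofReal r₁ * c₂E := by rw [ENNReal.ofReal_mul hr₁.le, hc2E]
      _ ≤ (psiNormE (Pa x) β (fun ω => pathTau m C ω) + δ) * c₂E :=
          mul_le_mul_left hslt.le _
      _ ≤ (N + δ) * c₂E := mul_le_mul_left (add_le_add_left hψβ δ) _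
      _ = N * c₂E + δ * c₂E := add_mul _ _ _
      _ = N * c₂E + ε := by rw [hδ, ENNReal.div_mul_cancel hc2E0 hc2Et]
end

section
/- Let α ∈ (0,1], β > α, γ = αβ/(β−α), c > 0, and let f : 𝒳 → ℝ be measurable. Define h(x) = log E_x exp( c^{−γ} |Z_0(f)|^γ ). Assume there exist a measurable function V : 𝒳 → [0,∞), a set C ∈ ℬ and constants b > 0, K > 0 such that V(x) ≤ K for all x ∈ C and, for every x ∈ 𝒳, (P^m V)(x) − V(x) ≤ −exp(h(x)) + b·1_C(x), where P^m is the m-step transition kernel. Then for every initial distribution μ on 𝒳, ‖ Σ_{k=0}^{τ_C−1} |Z_k(f)| ‖_{ψ_α, P_μ} ≤ ‖τ_C‖_{ψ_β, P_μ} · c·( max( log( μ(V) + b )/log 2 , 1 ) )^{1/γ}, where μ(V) = ∫ V dμ, the inequality being interpreted in [0,∞]. In particular, taking μ = δ_x this gives ‖ Σ_{k=0}^{τ_C−1} |Z_k(f)| ‖_{ψ_α, P_x} ≤ ‖τ_C‖_{ψ_β, P_x} · c·( max( log(V(x)+b)/log 2 , 1 ) )^{1/γ}. -/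
open MeasureTheory ProbabilityTheory Real
open scoped ENNReal

namespace S18

lemma expE_ofReal {t : ℝ} (ht : 0 ≤ t) : expE (ENNReal.ofReal t) = ENNReal.ofReal (Real.exp t) := by
  rw [expE, if_neg ENNReal.ofReal_ne_top, ENNReal.toReal_ofReal ht]

lemma one_le_expE (y : ℝ≥0∞) : 1 ≤ expE y := by
  rw [expE]
  split
  · exact le_top
  · rw [show (1:ℝ≥0∞) = ENNReal.ofReal 1 by simp]
    exact ENNReal.ofReal_le_ofReal (Real.one_le_exp ENNReal.toReal_nonneg)

lemma expE_mono : Monotone expE := by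
  intro a b hab
  rw [expE, expE]
  rcases eq_or_ne b ⊤ with hb | hb
  · simp [hb]
  · have ha : a ≠ ⊤ := fun h => hb (top_le_iff.mp (h ▸ hab))
    rw [if_neg ha, if_neg hb]
    exact ENNReal.ofReal_le_ofReal (Real.exp_le_exp.mpr (ENNReal.toReal_mono hb hab))

lemma measurable_expE : Measurable expE := by
  unfold expE
  exact Measurable.ite (measurableSet_singleton ⊤) measurable_const
    (ENNReal.measurable_ofReal.comp (Real.measurable_exp.comp ENNReal.measurable_toReal))

lemma expE_rpow (y : ℝ≥0∞) {θ : ℝ} (hθ : 0 < θ) :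
    expE y ^ θ = expE (ENNReal.ofReal θ * y) := by
  rcases eq_or_ne y ⊤ with hy | hy
  · rw [hy, expE, if_pos rfl, ENNReal.top_rpow_of_pos hθ, ENNReal.mul_top, expE, if_pos rfl]
    simp [ENNReal.ofReal_eq_zero, not_le.mpr hθ]
  · rw [expE, if_neg hy, expE, if_neg (by
      exact ENNReal.mul_ne_top ENNReal.ofReal_ne_top hy),
      ENNReal.ofReal_rpow_of_nonneg (Real.exp_nonneg _) hθ.le,
      ENNReal.toReal_mul, ENNReal.toReal_ofReal hθ.le, ← Real.exp_mul, mul_comm]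

section Tau
variable {𝒳 : Type*} [MeasurableSpace 𝒳] {m : ℕ} {C : Set 𝒳} {ω : ℕ → 𝒳}

lemma pathTau_mem_le {j : ℕ} (hj : 1 ≤ j) (hmem : ω (j * m) ∈ C) :
    pathTau m C ω ≤ j :=
  sInf_le ⟨j, rfl, hj, hmem⟩

lemma one_le_pathTau : 1 ≤ pathTau m C ω := by
  refine le_sInf fun a ha => ?_
  obtain ⟨j, rfl, hj, -⟩ := ha
  exact_mod_cast hj

lemma pathTau_cases : pathTau m C ω = ⊤ ∨
    ∃ n : ℕ, 1 ≤ n ∧ ω (n * m) ∈ C ∧ pathTau m C ω = n := by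
  by_cases hex : ∃ j : ℕ, 1 ≤ j ∧ ω (j * m) ∈ C
  · right
    classical
    refine ⟨Nat.find hex, (Nat.find_spec hex).1, (Nat.find_spec hex).2, le_antisymm
      (pathTau_mem_le (Nat.find_spec hex).1 (Nat.find_spec hex).2) (le_sInf fun a ha => ?_)⟩
    obtain ⟨j, rfl, hj, hmem⟩ := ha
    exact_mod_cast Nat.find_min' hex ⟨hj, hmem⟩
  · left
    rw [pathTau, sInf_eq_top]
    rintro a ⟨j, rfl, hj, hmem⟩
    exact (hex ⟨j, hj, hmem⟩).elim

lemma lt_pathTau_iff {k : ℕ} :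
    (k : ℝ≥0∞) < pathTau m C ω ↔ ∀ j : ℕ, 1 ≤ j → j ≤ k → ω (j * m) ∉ C := by
  constructor
  · intro hk j hj1 hjk hmem
    exact absurd ((pathTau_mem_le hj1 hmem).trans (by exact_mod_cast hjk)) (not_le_of_gt hk)
  · intro hall
    rcases pathTau_cases (m := m) (C := C) (ω := ω) with htop | ⟨n, hn1, hmem, heq⟩
    · rw [htop]; exact ENNReal.natCast_lt_top k
    · rw [heq]
      by_contra hle
      have : n ≤ k := by exact_mod_cast not_lt.mp hle
      exact hall n hn1 this hmem

open Classical in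
lemma pathTau_eq_iInf :
    pathTau m C ω = ⨅ j : ℕ, if 1 ≤ j ∧ ω (j * m) ∈ C then (j : ℝ≥0∞) else ⊤ := by
  apply le_antisymm
  · refine le_iInf fun j => ?_
    split
    · next hc => exact pathTau_mem_le hc.1 hc.2
    · exact le_top
  · refine le_sInf fun a ha => ?_
    obtain ⟨j, rfl, hj, hmem⟩ := ha
    exact (iInf_le _ j).trans (by rw [if_pos ⟨hj, hmem⟩])

open Classical in
lemma measurable_pathTau (hC : MeasurableSet C) : Measurable (pathTau m C) := by
  have : (pathTau m C) = fun ω => ⨅ j : ℕ, if 1 ≤ j ∧ ω (j * m) ∈ C then (j : ℝ≥0∞) else ⊤ :=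
    funext fun ω => pathTau_eq_iInf
  rw [this]
  refine Measurable.iInf fun j => ?_
  by_cases hj : 1 ≤ j
  · simp only [hj, true_and]
    exact Measurable.ite ((measurable_pi_apply (j * m)) hC) measurable_const measurable_const
  · simp [hj]

lemma measurableSet_lt_pathTau (hC : MeasurableSet C) {k : ℕ} :
    MeasurableSet {ω : ℕ → 𝒳 | (k : ℝ≥0∞) < pathTau m C ω} :=
  measurable_pathTau hC measurableSet_Ioi

lemma measurable_pathZ {f : 𝒳 → ℝ} (hf : Measurable f) (k : ℕ) :
    Measurable (pathZ m f k) := by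
  unfold pathZ
  exact Finset.measurable_sum _ fun j _ => hf.comp (measurable_pi_apply _)

lemma pathZ_shift {f : 𝒳 → ℝ} (k : ℕ) :
    pathZ m f 0 (fun i => ω (k * m + i)) = pathZ m f k ω := by
  unfold pathZ
  exact Finset.sum_congr rfl fun j _ => by rw [zero_mul, zero_add]

end Tau

section Markov
variable {𝒳 : Type*} [MeasurableSpace 𝒳]

lemma measurable_prependPath (x : 𝒳) : Measurable (prependPath x) := by
  refine measurable_pi_lambda _ fun n => ?_
  cases n with
  | zero => exact measurable_const
  | succ k => exact measurable_pi_apply k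

variable (κ : Kernel 𝒳 𝒳) [IsMarkovKernel κ]
  (Pa : 𝒳 → Measure (ℕ → 𝒳)) [∀ x, IsProbabilityMeasure (Pa x)]

lemma lintegral_Pa (hPa_meas : Measurable Pa)
    (hPa : ∀ x, Pa x = (κ x).bind fun y => (Pa y).map (prependPath x))
    (x : 𝒳) {F : (ℕ → 𝒳) → ℝ≥0∞} (hF : Measurable F) :
    ∫⁻ ω, F ω ∂(Pa x) = ∫⁻ y, ∫⁻ η, F (prependPath x η) ∂(Pa y) ∂(κ x) := by
  have hk : Measurable fun y => (Pa y).map (prependPath x) :=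
    (Measure.measurable_map _ (measurable_prependPath x)).comp hPa_meas
  rw [hPa x, Measure.lintegral_bind hk.aemeasurable hF.aemeasurable]
  exact lintegral_congr fun y => lintegral_map hF (measurable_prependPath x)

lemma isProbabilityMeasure_bind (hPa_meas : Measurable Pa) (μ : Measure 𝒳)
    [IsProbabilityMeasure μ] : IsProbabilityMeasure (μ.bind Pa) := by
  constructor
  rw [Measure.bind_apply MeasurableSet.univ hPa_meas.aemeasurable]
  simp [measure_univ]

lemma markov (hPa_meas : Measurable Pa)
    (hPa : ∀ x, Pa x = (κ x).bind fun y => (Pa y).map (prependPath x))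
    {H : (ℕ → 𝒳) → ℝ≥0∞} (hH : Measurable H) :
    ∀ (n : ℕ) (x : 𝒳) (G : (ℕ → 𝒳) → ℝ≥0∞), Measurable G →
      (∀ ω ω' : ℕ → 𝒳, (∀ i ≤ n, ω i = ω' i) → G ω = G ω') →
      ∫⁻ ω, G ω * H (fun i => ω (n + i)) ∂(Pa x)
        = ∫⁻ ω, G ω * ∫⁻ η, H η ∂(Pa (ω n)) ∂(Pa x) := by
  have hW : Measurable fun y => ∫⁻ η, H η ∂(Pa y) :=
    (Measure.measurable_lintegral hH).comp hPa_meas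
  intro n
  induction n with
  | zero =>
    intro x G hG hGdep
    have hGx : ∀ η : ℕ → 𝒳, G (prependPath x η) = G (prependPath x fun _ => x) := by
      intro η
      refine hGdep _ _ fun i hi => ?_
      obtain rfl := Nat.le_zero.mp hi
      rfl
    have h0 : ∀ ω : ℕ → 𝒳, (fun i => ω (0 + i)) = ω := fun ω => funext fun i => by rw [zero_add]
    have hHp : Measurable fun η => H (prependPath x η) := hH.comp (measurable_prependPath x)
    have hWp : Measurable fun y => ∫⁻ η, H (prependPath x η) ∂(Pa y) :=
      (Measure.measurable_lintegral hHp).comp hPa_meas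
    calc ∫⁻ ω, G ω * H (fun i => ω (0 + i)) ∂(Pa x)
        = ∫⁻ ω, G ω * H ω ∂(Pa x) := by simp only [h0]
      _ = ∫⁻ y, ∫⁻ η, G (prependPath x η) * H (prependPath x η) ∂(Pa y) ∂(κ x) :=
          lintegral_Pa κ Pa hPa_meas hPa x (hG.mul hH)
      _ = ∫⁻ y, ∫⁻ η, G (prependPath x fun _ => x) * H (prependPath x η) ∂(Pa y) ∂(κ x) :=
          lintegral_congr fun y => lintegral_congr fun η => by rw [hGx η]
      _ = G (prependPath x fun _ => x) * ∫⁻ y, ∫⁻ η, H (prependPath x η) ∂(Pa y) ∂(κ x) := by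
          rw [← lintegral_const_mul _ hWp]
          exact lintegral_congr fun y => lintegral_const_mul _ hHp
      _ = G (prependPath x fun _ => x) * ∫⁻ ω, H ω ∂(Pa x) := by
          rw [← lintegral_Pa κ Pa hPa_meas hPa x hH]
      _ = ∫⁻ y, ∫⁻ η, G (prependPath x fun _ => x) * (∫⁻ ω, H ω ∂(Pa x)) ∂(Pa y) ∂(κ x) := by
          simp [lintegral_const, measure_univ]
      _ = ∫⁻ y, ∫⁻ η, G (prependPath x η) * ∫⁻ ζ, H ζ ∂(Pa (prependPath x η 0)) ∂(Pa y) ∂(κ x) :=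
          lintegral_congr fun y => lintegral_congr fun η => by rw [hGx η]; rfl
      _ = ∫⁻ ω, G ω * ∫⁻ η, H η ∂(Pa (ω 0)) ∂(Pa x) :=
          (lintegral_Pa κ Pa hPa_meas hPa x (hG.mul (hW.comp (measurable_pi_apply 0)))).symm
  | succ n ih =>
    intro x G hG hGdep
    have hshift : ∀ η : ℕ → 𝒳, (fun i => prependPath x η (n + 1 + i)) = fun i => η (n + i) := by
      intro η; funext i
      show prependPath x η (n + 1 + i) = η (n + i)
      have hni : n + 1 + i = (n + i) + 1 := by omega
      rw [hni]
      rfl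
    have hGm : Measurable fun η => G (prependPath x η) := hG.comp (measurable_prependPath x)
    have hGdep' : ∀ ω ω' : ℕ → 𝒳, (∀ i ≤ n, ω i = ω' i) →
        G (prependPath x ω) = G (prependPath x ω') := by
      intro ω ω' hag
      refine hGdep _ _ fun i hi => ?_
      cases i with
      | zero => rfl
      | succ j =>
        show ω j = ω' j
        exact hag j (by omega)
    calc ∫⁻ ω, G ω * H (fun i => ω (n + 1 + i)) ∂(Pa x)
        = ∫⁻ y, ∫⁻ η, G (prependPath x η) * H (fun i => prependPath x η (n + 1 + i))
            ∂(Pa y) ∂(κ x) :=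
          lintegral_Pa κ Pa hPa_meas hPa x (hG.mul (hH.comp (measurable_pi_lambda _
            fun i => measurable_pi_apply _)))
      _ = ∫⁻ y, ∫⁻ η, G (prependPath x η) * H (fun i => η (n + i)) ∂(Pa y) ∂(κ x) :=
          lintegral_congr fun y => lintegral_congr fun η => by rw [hshift η]
      _ = ∫⁻ y, ∫⁻ η, G (prependPath x η) * ∫⁻ ζ, H ζ ∂(Pa (η n)) ∂(Pa y) ∂(κ x) :=
          lintegral_congr fun y => ih y _ hGm hGdep'
      _ = ∫⁻ ω, G ω * ∫⁻ η, H η ∂(Pa (ω (n + 1))) ∂(Pa x) :=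
          (lintegral_Pa κ Pa hPa_meas hPa x (hG.mul (hW.comp (measurable_pi_apply (n + 1))))).symm

end Markov

section Chain
variable {𝒳 : Type*} [MeasurableSpace 𝒳]

/-- `e'_k`. -/
noncomputable def eF (γ c : ℝ) (m : ℕ) (f : 𝒳 → ℝ) (k : ℕ) (ω : ℕ → 𝒳) : ℝ≥0∞ :=
  ENNReal.ofReal (Real.exp (|pathZ m f k ω| ^ γ / c ^ γ))

/-- indicator of `k < τ`. -/
noncomputable def gI (m : ℕ) (C : Set 𝒳) (k : ℕ) (ω : ℕ → 𝒳) : ℝ≥0∞ :=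
  if (k : ℝ≥0∞) < pathTau m C ω then 1 else 0

variable {m : ℕ} {C : Set 𝒳} {f : 𝒳 → ℝ} {γ c : ℝ}

lemma measurable_eF (hf : Measurable f) (k : ℕ) : Measurable (eF γ c m f k) := by
  unfold eF
  exact ENNReal.measurable_ofReal.comp
    ((((measurable_pathZ hf k).abs.pow_const γ).div_const _).exp)

lemma measurable_gI (hC : MeasurableSet C) (k : ℕ) : Measurable (gI m C k) :=
  Measurable.ite (measurableSet_lt_pathTau hC) measurable_const measurable_const

lemma gI_zero (ω : ℕ → 𝒳) : gI m C 0 ω = 1 :=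
  if_pos (lt_of_lt_of_le (by norm_num) (one_le_pathTau (m := m) (C := C) (ω := ω)))

lemma gI_succ_le (k : ℕ) (ω : ℕ → 𝒳) : gI m C (k + 1) ω ≤ gI m C k ω := by
  unfold gI
  split
  · next hlt =>
    rw [if_pos (lt_of_le_of_lt (by exact_mod_cast Nat.cast_le.mpr (Nat.le_succ k)) hlt)]
  · exact zero_le

lemma gI_dep (n : ℕ) (ω ω' : ℕ → 𝒳) (hag : ∀ i ≤ n * m, ω i = ω' i) :
    gI m C n ω = gI m C n ω' := by
  unfold gI
  refine if_congr ?_ rfl rfl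
  rw [lt_pathTau_iff, lt_pathTau_iff]
  exact forall_congr' fun j => forall_congr' fun hj1 => forall_congr' fun hjn => by
    rw [hag (j * m) (Nat.mul_le_mul_right m hjn)]

lemma eF_shift (k : ℕ) (ω : ℕ → 𝒳) :
    eF γ c m f 0 (fun i => ω (k * m + i)) = eF γ c m f k ω := by
  unfold eF
  rw [pathZ_shift]

variable (κ : Kernel 𝒳 𝒳) [IsMarkovKernel κ]
  (Pa : 𝒳 → Measure (ℕ → 𝒳)) [∀ x, IsProbabilityMeasure (Pa x)]

lemma keyLemma (hPa_meas : Measurable Pa)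
    (hPa : ∀ x, Pa x = (κ x).bind fun y => (Pa y).map (prependPath x))
    (hf : Measurable f) (hC : MeasurableSet C)
    {V : 𝒳 → ℝ} (hVm : Measurable V) (hV0 : ∀ x, 0 ≤ V x)
    {b : ℝ} (hb : 0 ≤ b) {h : 𝒳 → ℝ}
    (hh : ∀ x, ∫⁻ ω, eF γ c m f 0 ω ∂(Pa x) = ENNReal.ofReal (Real.exp (h x)))
    (hdrift : ∀ x, (∫⁻ ω, ENNReal.ofReal (V (ω m)) ∂(Pa x)) +
          ENNReal.ofReal (Real.exp (h x))
        ≤ ENNReal.ofReal (V x + b * Set.indicator C (fun _ => 1) x)) :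
    ∀ (n : ℕ) (x : 𝒳),
      (∫⁻ ω, gI m C n ω * ENNReal.ofReal (V (ω (n * m))) ∂(Pa x))
        + ∑ k ∈ Finset.range n, ∫⁻ ω, gI m C k ω * eF γ c m f k ω ∂(Pa x)
      ≤ ENNReal.ofReal (V x) + ENNReal.ofReal b := by
  have measV0 : ∀ j : ℕ, Measurable fun ω : ℕ → 𝒳 => ENNReal.ofReal (V (ω j)) :=
    fun j => ENNReal.measurable_ofReal.comp (hVm.comp (measurable_pi_apply j))
  have lintV0 : ∀ x : 𝒳, (∫⁻ ω, ENNReal.ofReal (V (ω 0)) ∂(Pa x)) = ENNReal.ofReal (V x) := by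
    intro x
    rw [lintegral_Pa κ Pa hPa_meas hPa x (measV0 0)]
    have : ∀ η : ℕ → 𝒳, prependPath x η 0 = x := fun η => rfl
    simp only [this, lintegral_const, measure_univ, mul_one]
  intro n
  induction n with
  | zero =>
    intro x
    simp only [Finset.sum_range_zero, add_zero, Nat.zero_mul]
    calc (∫⁻ ω, gI m C 0 ω * ENNReal.ofReal (V (ω 0)) ∂(Pa x))
        = ∫⁻ ω, ENNReal.ofReal (V (ω 0)) ∂(Pa x) :=
          lintegral_congr fun ω => by rw [gI_zero, one_mul]
      _ = ENNReal.ofReal (V x) := lintV0 x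
      _ ≤ _ := le_self_add
  | succ n ih =>
    intro x
    have hHmeas : Measurable fun η : ℕ → 𝒳 => ENNReal.ofReal (V (η m)) + eF γ c m f 0 η :=
      (measV0 m).add (measurable_eF hf 0)
    have hGdep : ∀ ω ω' : ℕ → 𝒳, (∀ i ≤ n * m, ω i = ω' i) → gI m C n ω = gI m C n ω' :=
      gI_dep n
    have step1 : ∫⁻ ω, gI m C n ω * (ENNReal.ofReal (V (ω (n * m + m))) + eF γ c m f n ω) ∂(Pa x)
        = ∫⁻ ω, gI m C n ω *
            (∫⁻ η, (ENNReal.ofReal (V (η m)) + eF γ c m f 0 η) ∂(Pa (ω (n * m)))) ∂(Pa x) := by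
      have hmk := markov κ Pa hPa_meas hPa hHmeas (n * m) x (gI m C n) (measurable_gI hC n) hGdep
      rw [← hmk]
      refine lintegral_congr fun ω => ?_
      rw [eF_shift]
    have step2 : ∀ y : 𝒳,
        (∫⁻ η, (ENNReal.ofReal (V (η m)) + eF γ c m f 0 η) ∂(Pa y))
          ≤ ENNReal.ofReal (V y + b * Set.indicator C (fun _ => 1) y) := by
      intro y
      rw [lintegral_add_left (measV0 m), hh y]
      exact hdrift y
    have main : (∫⁻ ω, gI m C (n + 1) ω * ENNReal.ofReal (V (ω ((n + 1) * m))) ∂(Pa x))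
          + ∫⁻ ω, gI m C n ω * eF γ c m f n ω ∂(Pa x)
        ≤ ∫⁻ ω, gI m C n ω *
            ENNReal.ofReal (V (ω (n * m)) + b * Set.indicator C (fun _ => 1) (ω (n * m)))
            ∂(Pa x) := by
      calc (∫⁻ ω, gI m C (n + 1) ω * ENNReal.ofReal (V (ω ((n + 1) * m))) ∂(Pa x))
            + ∫⁻ ω, gI m C n ω * eF γ c m f n ω ∂(Pa x)
          = ∫⁻ ω, (gI m C (n + 1) ω * ENNReal.ofReal (V (ω ((n + 1) * m)))
              + gI m C n ω * eF γ c m f n ω) ∂(Pa x) :=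
            (lintegral_add_left (((measurable_gI hC (n+1)).mul (measV0 ((n+1)*m)))) _).symm
        _ ≤ ∫⁻ ω, gI m C n ω * (ENNReal.ofReal (V (ω (n * m + m))) + eF γ c m f n ω) ∂(Pa x) := by
            refine lintegral_mono fun ω => ?_
            rw [mul_add, Nat.succ_mul]
            exact add_le_add (mul_le_mul_left (gI_succ_le n ω) _) le_rfl
        _ = _ := step1
        _ ≤ _ := lintegral_mono fun ω => mul_le_mul_right (step2 _) _
    have rearr : (∫⁻ ω, gI m C (n + 1) ω * ENNReal.ofReal (V (ω ((n + 1) * m))) ∂(Pa x))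
          + ∑ k ∈ Finset.range (n + 1), ∫⁻ ω, gI m C k ω * eF γ c m f k ω ∂(Pa x)
        = ((∫⁻ ω, gI m C (n + 1) ω * ENNReal.ofReal (V (ω ((n + 1) * m))) ∂(Pa x))
            + ∫⁻ ω, gI m C n ω * eF γ c m f n ω ∂(Pa x))
          + ∑ k ∈ Finset.range n, ∫⁻ ω, gI m C k ω * eF γ c m f k ω ∂(Pa x) := by
      rw [Finset.sum_range_succ]; ring
    rw [rearr]
    cases n with
    | zero =>
      simp only [Finset.sum_range_zero, add_zero]
      refine main.trans ?_
      have hφ : Measurable fun y => V y + b * Set.indicator C (fun _ => (1:ℝ)) y :=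
        hVm.add (measurable_const.mul (measurable_const.indicator hC))
      calc ∫⁻ ω, gI m C 0 ω *
              ENNReal.ofReal (V (ω (0 * m)) + b * Set.indicator C (fun _ => 1) (ω (0 * m)))
              ∂(Pa x)
          = ∫⁻ ω, ENNReal.ofReal (V (ω 0) + b * Set.indicator C (fun _ => 1) (ω 0)) ∂(Pa x) :=
            lintegral_congr fun ω => by rw [gI_zero, one_mul, Nat.zero_mul]
        _ = ENNReal.ofReal (V x + b * Set.indicator C (fun _ => 1) x) := by
            rw [lintegral_Pa κ Pa hPa_meas hPa x
              (F := fun ω => ENNReal.ofReal (V (ω 0) + b * Set.indicator C (fun _ => 1) (ω 0)))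
              (by exact ENNReal.measurable_ofReal.comp (hφ.comp (measurable_pi_apply 0)))]
            have hp0 : ∀ η : ℕ → 𝒳, prependPath x η 0 = x := fun η => rfl
            simp only [hp0, lintegral_const, measure_univ, mul_one]
        _ ≤ ENNReal.ofReal (V x + b) := by
            refine ENNReal.ofReal_le_ofReal (add_le_add le_rfl ?_)
            calc b * Set.indicator C (fun _ => (1:ℝ)) x ≤ b * 1 := by
                  refine mul_le_mul_of_nonneg_left ?_ hb
                  exact Set.indicator_le_self' (fun _ _ => zero_le_one) x |>.trans le_rfl
              _ = b := mul_one b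
        _ = ENNReal.ofReal (V x) + ENNReal.ofReal b := ENNReal.ofReal_add (hV0 x) hb
    | succ p =>
      have hptw : ∫⁻ ω, gI m C (p + 1) ω *
            ENNReal.ofReal (V (ω ((p + 1) * m))
              + b * Set.indicator C (fun _ => 1) (ω ((p + 1) * m))) ∂(Pa x)
          = ∫⁻ ω, gI m C (p + 1) ω * ENNReal.ofReal (V (ω ((p + 1) * m))) ∂(Pa x) := by
        refine lintegral_congr fun ω => ?_
        unfold gI
        split
        · next hlt =>
          rw [Set.indicator_of_notMem (lt_pathTau_iff.mp hlt (p + 1) (by omega) le_rfl),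
            mul_zero, add_zero]
        · rw [zero_mul, zero_mul]
      exact (add_le_add_left (main.trans (le_of_eq hptw)) _).trans (ih x)

end Chain

section NPart
variable {𝒳 : Type*} [MeasurableSpace 𝒳] {m : ℕ} {C : Set 𝒳} {f : 𝒳 → ℝ} {γ c s : ℝ}

/-- `N_s(ω) = sup_{k<τ} exp(ξ_k^γ/s^γ)`. -/
noncomputable def NF (γ s : ℝ) (m : ℕ) (C : Set 𝒳) (f : 𝒳 → ℝ) (ω : ℕ → 𝒳) : ℝ≥0∞ :=
  ⨆ k : ℕ, if (k : ℝ≥0∞) < pathTau m C ω then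
    expE ((ENNReal.ofReal |pathZ m f k ω|) ^ γ / ENNReal.ofReal (s ^ γ)) else 0

lemma expE_term (hγ : 0 < γ) (hs : 0 < s) {t : ℝ} (ht : 0 ≤ t) :
    expE ((ENNReal.ofReal t) ^ γ / ENNReal.ofReal (s ^ γ))
      = ENNReal.ofReal (Real.exp (t ^ γ / s ^ γ)) := by
  rw [ENNReal.ofReal_rpow_of_nonneg ht hγ.le,
    ← ENNReal.ofReal_div_of_pos (Real.rpow_pos_of_pos hs γ),
    expE_ofReal (div_nonneg (Real.rpow_nonneg ht γ) (Real.rpow_nonneg hs.le γ))]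

lemma measurable_NF (hC : MeasurableSet C) (hf : Measurable f) :
    Measurable (NF γ s m C f) := by
  refine Measurable.iSup fun k => Measurable.ite (measurableSet_lt_pathTau hC) ?_ measurable_const
  refine measurable_expE.comp ?_
  exact ((ENNReal.measurable_ofReal.comp (measurable_pathZ hf k).abs).pow_const γ).div
    measurable_const

lemma one_le_NF (ω : ℕ → 𝒳) : 1 ≤ NF γ s m C f ω := by
  refine le_trans ?_ (le_iSup _ 0)
  rw [if_pos (lt_of_lt_of_le (by norm_num) (one_le_pathTau (m := m) (C := C) (ω := ω)))]
  exact one_le_expE _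

lemma NF_le_tsum (hγ : 0 < γ) (hc : 0 < c) (ω : ℕ → 𝒳) :
    NF γ c m C f ω ≤ ∑' k, gI m C k ω * eF γ c m f k ω := by
  refine iSup_le fun k => le_trans ?_ (ENNReal.le_tsum k)
  unfold gI eF
  split
  · rw [one_mul, expE_term hγ hc (abs_nonneg _)]
  · exact zero_le

variable (κ : Kernel 𝒳 𝒳) [IsMarkovKernel κ]
  (Pa : 𝒳 → Measure (ℕ → 𝒳)) [∀ x, IsProbabilityMeasure (Pa x)]

lemma tsum_bound (hPa_meas : Measurable Pa)
    (hPa : ∀ x, Pa x = (κ x).bind fun y => (Pa y).map (prependPath x))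
    (hf : Measurable f) (hC : MeasurableSet C)
    {V : 𝒳 → ℝ} (hVm : Measurable V) (hV0 : ∀ x, 0 ≤ V x)
    {b : ℝ} (hb : 0 ≤ b) {h : 𝒳 → ℝ}
    (hh : ∀ x, ∫⁻ ω, eF γ c m f 0 ω ∂(Pa x) = ENNReal.ofReal (Real.exp (h x)))
    (hdrift : ∀ x, (∫⁻ ω, ENNReal.ofReal (V (ω m)) ∂(Pa x)) +
          ENNReal.ofReal (Real.exp (h x))
        ≤ ENNReal.ofReal (V x + b * Set.indicator C (fun _ => 1) x)) (x : 𝒳) :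
    ∑' k, ∫⁻ ω, gI m C k ω * eF γ c m f k ω ∂(Pa x)
      ≤ ENNReal.ofReal (V x) + ENNReal.ofReal b := by
  rw [ENNReal.tsum_eq_iSup_nat]
  refine iSup_le fun n => le_trans le_add_self
    (keyLemma κ Pa hPa_meas hPa hf hC hVm hV0 hb hh hdrift n x)

lemma NF_int_le (hPa_meas : Measurable Pa)
    (hPa : ∀ x, Pa x = (κ x).bind fun y => (Pa y).map (prependPath x))
    (hf : Measurable f) (hC : MeasurableSet C) (hγ : 0 < γ) (hc : 0 < c)
    {V : 𝒳 → ℝ} (hVm : Measurable V) (hV0 : ∀ x, 0 ≤ V x)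
    {b : ℝ} (hb : 0 ≤ b) {h : 𝒳 → ℝ}
    (hh : ∀ x, ∫⁻ ω, eF γ c m f 0 ω ∂(Pa x) = ENNReal.ofReal (Real.exp (h x)))
    (hdrift : ∀ x, (∫⁻ ω, ENNReal.ofReal (V (ω m)) ∂(Pa x)) +
          ENNReal.ofReal (Real.exp (h x))
        ≤ ENNReal.ofReal (V x + b * Set.indicator C (fun _ => 1) x))
    (μ : Measure 𝒳) [IsProbabilityMeasure μ] :
    ∫⁻ ω, NF γ c m C f ω ∂(μ.bind Pa)
      ≤ (∫⁻ x, ENNReal.ofReal (V x) ∂μ) + ENNReal.ofReal b := by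
  have hmeasGE : ∀ k : ℕ, Measurable fun ω => gI m C k ω * eF γ c m f k ω :=
    fun k => (measurable_gI hC k).mul (measurable_eF hf k)
  calc ∫⁻ ω, NF γ c m C f ω ∂(μ.bind Pa)
      ≤ ∫⁻ ω, (∑' k, gI m C k ω * eF γ c m f k ω) ∂(μ.bind Pa) :=
        lintegral_mono (NF_le_tsum hγ hc)
    _ = ∑' k, ∫⁻ ω, gI m C k ω * eF γ c m f k ω ∂(μ.bind Pa) :=
        lintegral_tsum fun k => (hmeasGE k).aemeasurable
    _ = ∑' k, ∫⁻ x, (∫⁻ ω, gI m C k ω * eF γ c m f k ω ∂(Pa x)) ∂μ :=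
        tsum_congr fun k => Measure.lintegral_bind hPa_meas.aemeasurable (hmeasGE k).aemeasurable
    _ = ∫⁻ x, (∑' k, ∫⁻ ω, gI m C k ω * eF γ c m f k ω ∂(Pa x)) ∂μ :=
        (lintegral_tsum fun k =>
          ((Measure.measurable_lintegral (hmeasGE k)).comp hPa_meas).aemeasurable).symm
    _ ≤ ∫⁻ x, (ENNReal.ofReal (V x) + ENNReal.ofReal b) ∂μ :=
        lintegral_mono fun x => tsum_bound κ Pa hPa_meas hPa hf hC hVm hV0 hb hh hdrift x
    _ = (∫⁻ x, ENNReal.ofReal (V x) ∂μ) + ENNReal.ofReal b := by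
        rw [lintegral_add_right _ measurable_const, lintegral_const, measure_univ, mul_one]

end NPart

section Analytic

lemma jensen_rpow {Ω : Type*} [MeasurableSpace Ω] (Q : Measure Ω) [IsProbabilityMeasure Q]
    {g : Ω → ℝ≥0∞} (hg : AEMeasurable g Q) {θ : ℝ} (h0 : 0 < θ) (h1 : θ ≤ 1) :
    ∫⁻ ω, g ω ^ θ ∂Q ≤ (∫⁻ ω, g ω ∂Q) ^ θ := by
  rcases eq_or_lt_of_le h1 with rfl | hlt
  · simp
  · have hconj : (1/θ).HolderConjugate (1-θ)⁻¹ := by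
      rw [Real.holderConjugate_iff]; constructor
      · rw [lt_div_iff₀ h0, one_mul]; exact hlt
      · rw [one_div, inv_inv, inv_inv]; ring
    have key := ENNReal.lintegral_mul_le_Lp_mul_Lq Q hconj
      (f := fun ω => g ω ^ θ) (g := fun _ => 1)
      (hg.pow_const θ) aemeasurable_const
    simp only [mul_one, ENNReal.one_rpow, lintegral_one, measure_univ] at key
    calc ∫⁻ ω, g ω ^ θ ∂Q = ∫⁻ ω, (fun ω => g ω ^ θ) ω * 1 ∂Q := by simp
      _ ≤ (∫⁻ ω, (g ω ^ θ) ^ (1/θ) ∂Q) ^ (1/(1/θ)) * 1 ^ (1/(1-θ)⁻¹) := by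
          simpa using key
      _ = (∫⁻ ω, g ω ∂Q) ^ θ := by
          rw [ENNReal.one_rpow, mul_one, one_div_one_div]
          congr 1
          refine lintegral_congr fun ω => ?_
          rw [← ENNReal.rpow_mul, mul_one_div_cancel h0.ne', ENNReal.rpow_one]

lemma rpow_inv_max_log_le {A : ℝ} (hA : 0 ≤ A) :
    A ^ (max (Real.log A / Real.log 2) 1)⁻¹ ≤ 2 := by
  set mg := max (Real.log A / Real.log 2) 1 with hmg
  have hmg1 : 1 ≤ mg := le_max_right _ _
  have hmgpos : 0 < mg := lt_of_lt_of_le one_pos hmg1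
  rcases le_or_gt A 1 with hA1 | hA1
  · exact (Real.rpow_le_one hA hA1 (inv_nonneg.mpr hmgpos.le)).trans one_le_two
  · have hlog2 : 0 < Real.log 2 := Real.log_pos one_lt_two
    have hloga : Real.log A ≤ mg * Real.log 2 := by
      have : Real.log A / Real.log 2 ≤ mg := le_max_left _ _
      calc Real.log A = (Real.log A / Real.log 2) * Real.log 2 := by
            field_simp
        _ ≤ mg * Real.log 2 := mul_le_mul_of_nonneg_right this hlog2.le
    rw [Real.rpow_def_of_pos (lt_trans one_pos hA1)]
    rw [show (2:ℝ) = Real.exp (Real.log 2) from (Real.exp_log two_pos).symm]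
    refine Real.exp_le_exp.mpr ?_
    rw [← div_eq_mul_inv, div_le_iff₀ hmgpos]
    rw [mul_comm] at hloga
    exact hloga

end Analytic

section Pointwise
variable {𝒳 : Type*} [MeasurableSpace 𝒳] {m : ℕ} {C : Set 𝒳} {f : 𝒳 → ℝ} {α β γ c : ℝ}

lemma le_NF {γ s : ℝ} {m : ℕ} {C : Set 𝒳} {f : 𝒳 → ℝ} (ω : ℕ → 𝒳) (k : ℕ) :
    (if (k : ℝ≥0∞) < pathTau m C ω then
      expE ((ENNReal.ofReal |pathZ m f k ω|) ^ γ / ENNReal.ofReal (s ^ γ)) else 0)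
      ≤ NF γ s m C f ω := by
  unfold NF
  exact le_iSup (fun k : ℕ => if (k : ℝ≥0∞) < pathTau m C ω then
    expE ((ENNReal.ofReal |pathZ m f k ω|) ^ γ / ENNReal.ofReal (s ^ γ)) else 0) k

lemma NF_scaled (hγ : 0 < γ) (hc : 0 < c) {mg : ℝ} (hmg : 1 ≤ mg) (ω : ℕ → 𝒳) :
    NF γ (c * mg ^ (1/γ)) m C f ω ≤ (NF γ c m C f ω) ^ (mg⁻¹) := by
  have hmgpos : 0 < mg := lt_of_lt_of_le one_pos hmg
  have hθpos : 0 < mg⁻¹ := inv_pos.mpr hmgpos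
  have hspos : 0 < c * mg ^ (1/γ) := mul_pos hc (Real.rpow_pos_of_pos hmgpos _)
  refine iSup_le fun k => ?_
  have hterm : (if (k : ℝ≥0∞) < pathTau m C ω then
        expE ((ENNReal.ofReal |pathZ m f k ω|) ^ γ
          / ENNReal.ofReal ((c * mg ^ (1/γ)) ^ γ)) else 0)
      = (if (k : ℝ≥0∞) < pathTau m C ω then
        expE ((ENNReal.ofReal |pathZ m f k ω|) ^ γ / ENNReal.ofReal (c ^ γ)) else 0) ^ mg⁻¹ := by
    split
    · rw [expE_term hγ hspos (abs_nonneg _), expE_term hγ hc (abs_nonneg _),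
        ENNReal.ofReal_rpow_of_nonneg (Real.exp_nonneg _) hθpos.le, ← Real.exp_mul]
      congr 2
      rw [Real.mul_rpow hc.le (Real.rpow_nonneg hmgpos.le _), ← Real.rpow_mul hmgpos.le,
        one_div_mul_cancel hγ.ne', Real.rpow_one, ← div_div, div_eq_mul_inv]
    · rw [ENNReal.zero_rpow_of_pos hθpos]
  rw [hterm]
  exact ENNReal.rpow_le_rpow (le_NF ω k) hθpos.le

lemma conj_exponents (hα : 0 < α) (hβ : α < β) (hγ : γ = α * β / (β - α)) :
    (β/α).HolderConjugate (γ/α) := by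
  have hβ0 : 0 < β := lt_trans hα hβ
  have hd : 0 < β - α := sub_pos.mpr hβ
  rw [Real.holderConjugate_iff]; constructor
  · exact (one_lt_div hα).mpr hβ
  · rw [inv_div, inv_div, hγ]
    field_simp
    ring

/-- The main pointwise inequality. -/
lemma pointwise_main (hα : 0 < α) (hβ : α < β) (hγ : γ = α * β / (β - α))
    {r s : ℝ} (hr : 0 < r) (hs : 0 < s) (ω : ℕ → 𝒳) :
    expE ((sumBefore (pathTau m C ω) fun k => ENNReal.ofReal |pathZ m f k ω|) ^ α
        / ENNReal.ofReal ((r * s) ^ α))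
      ≤ (expE ((pathTau m C ω) ^ β / ENNReal.ofReal (r ^ β))) ^ (α / β)
        * (NF γ s m C f ω) ^ (α / γ) := by
  have hβ0 : 0 < β := lt_trans hα hβ
  have hd : 0 < β - α := sub_pos.mpr hβ
  have hγ0 : 0 < γ := by
    rw [hγ]; exact div_pos (mul_pos hα hβ0) hd
  have hNF1 : (1 : ℝ≥0∞) ≤ (NF γ s m C f ω) ^ (α / γ) := by
    rw [show (1:ℝ≥0∞) = 1 ^ (α/γ) from (ENNReal.one_rpow _).symm]
    exact ENNReal.rpow_le_rpow (one_le_NF ω) (div_nonneg hα.le hγ0.le)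
  rcases pathTau_cases (m := m) (C := C) (ω := ω) with htop | ⟨n, hn1, -, heq⟩
  · have hrhs : (expE ((pathTau m C ω) ^ β / ENNReal.ofReal (r ^ β))) ^ (α / β)
        * (NF γ s m C f ω) ^ (α / γ) = ⊤ := by
      rw [htop, ENNReal.top_rpow_of_pos hβ0,
        ENNReal.top_div_of_ne_top ENNReal.ofReal_ne_top,
        show expE ⊤ = ⊤ from if_pos rfl,
        ENNReal.top_rpow_of_pos (div_pos hα hβ0),
        ENNReal.top_mul (by intro hz; rw [hz] at hNF1; exact (not_le.mpr zero_lt_one) hNF1)]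
    rw [hrhs]
    exact le_top
  · set Z : ℕ → ℝ := fun k => |pathZ m f k ω| with hZdef
    have hZ0 : ∀ k, 0 ≤ Z k := fun k => abs_nonneg _
    set T : ℝ := ∑ k ∈ Finset.range n, Z k with hTdef
    have hT0 : 0 ≤ T := Finset.sum_nonneg fun k _ => hZ0 k
    have hS : (sumBefore (pathTau m C ω) fun k => ENNReal.ofReal |pathZ m f k ω|)
        = ENNReal.ofReal T := by
      rw [sumBefore, heq]
      rw [tsum_eq_sum (s := Finset.range n) (f := fun k : ℕ =>
          if (k : ℝ≥0∞) < ((n:ℕ) : ℝ≥0∞) then ENNReal.ofReal |pathZ m f k ω| else 0)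
        (fun k hk => by
          rw [Finset.mem_range, not_lt] at hk
          exact if_neg (not_lt.mpr (by exact_mod_cast hk)))]
      rw [hTdef, ENNReal.ofReal_sum_of_nonneg fun k _ => hZ0 k]
      refine Finset.sum_congr rfl fun k hk => ?_
      rw [if_pos (by exact_mod_cast Finset.mem_range.mp hk)]
    obtain ⟨k₀, hk₀mem, hk₀max⟩ := Finset.exists_max_image (Finset.range n) Z
      ⟨0, Finset.mem_range.mpr (by omega)⟩
    set M : ℝ := Z k₀ with hMdef
    have hM0 : 0 ≤ M := hZ0 k₀
    have hTnM : T ≤ (n : ℝ) * M := by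
      calc T ≤ (Finset.range n).card • M :=
            Finset.sum_le_card_nsmul _ _ _ fun k hk => hk₀max k hk
        _ = (n : ℝ) * M := by rw [Finset.card_range, nsmul_eq_mul]
    have hconj := conj_exponents hα hβ hγ
    have hu0 : (0:ℝ) ≤ (n:ℝ)/r := div_nonneg (Nat.cast_nonneg n) hr.le
    have hv0 : (0:ℝ) ≤ M/s := div_nonneg hM0 hs.le
    have hab : α * (β/α) = β := by field_simp
    have hag : α * (γ/α) = γ := by field_simp
    have hyoung : ((n:ℝ)/r) ^ α * (M/s) ^ α
        ≤ ((n:ℝ)/r) ^ β * (α/β) + (M/s) ^ γ * (α/γ) := by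
      calc ((n:ℝ)/r) ^ α * (M/s) ^ α
          ≤ (((n:ℝ)/r) ^ α) ^ (β/α) / (β/α) + ((M/s) ^ α) ^ (γ/α) / (γ/α) :=
            Real.young_inequality_of_nonneg (Real.rpow_nonneg hu0 α)
              (Real.rpow_nonneg hv0 α) hconj
        _ = ((n:ℝ)/r) ^ β * (α/β) + (M/s) ^ γ * (α/γ) := by
            rw [← Real.rpow_mul hu0, ← Real.rpow_mul hv0, hab, hag,
              div_div_eq_mul_div, div_div_eq_mul_div, mul_div_assoc, mul_div_assoc]
    have hreal : T ^ α / (r*s) ^ α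
        ≤ ((n:ℝ) ^ β / r ^ β) * (α/β) + (M ^ γ / s ^ γ) * (α/γ) := by
      calc T ^ α / (r*s) ^ α = (T / (r*s)) ^ α :=
            (Real.div_rpow hT0 (mul_pos hr hs).le α).symm
        _ ≤ (((n:ℝ)*M) / (r*s)) ^ α :=
            Real.rpow_le_rpow (div_nonneg hT0 (mul_pos hr hs).le)
              ((div_le_div_iff_of_pos_right (mul_pos hr hs)).mpr hTnM) hα.le
        _ = ((n:ℝ)/r * (M/s)) ^ α := by rw [div_mul_div_comm]
        _ = ((n:ℝ)/r) ^ α * (M/s) ^ α := Real.mul_rpow hu0 hv0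
        _ ≤ ((n:ℝ)/r) ^ β * (α/β) + (M/s) ^ γ * (α/γ) := hyoung
        _ = ((n:ℝ) ^ β / r ^ β) * (α/β) + (M ^ γ / s ^ γ) * (α/γ) := by
            rw [Real.div_rpow (Nat.cast_nonneg n) hr.le, Real.div_rpow hM0 hs.le]
    have hfac1 : (expE ((pathTau m C ω) ^ β / ENNReal.ofReal (r ^ β))) ^ (α / β)
        = ENNReal.ofReal (Real.exp (((n:ℝ) ^ β / r ^ β) * (α/β))) := by
      rw [heq, show ((n:ℕ) : ℝ≥0∞) = ENNReal.ofReal ((n:ℕ):ℝ) from (ENNReal.ofReal_natCast n).symm,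
        expE_term hβ0 hr (Nat.cast_nonneg n),
        ENNReal.ofReal_rpow_of_nonneg (Real.exp_nonneg _) (div_nonneg hα.le hβ0.le),
        ← Real.exp_mul]
    have hfac2 : ENNReal.ofReal (Real.exp ((M ^ γ / s ^ γ) * (α/γ)))
        ≤ (NF γ s m C f ω) ^ (α / γ) := by
      have hk₀n : ((k₀:ℕ) : ℝ≥0∞) < pathTau m C ω := by
        rw [heq]; exact_mod_cast Finset.mem_range.mp hk₀mem
      calc ENNReal.ofReal (Real.exp ((M ^ γ / s ^ γ) * (α/γ)))
          = (expE ((ENNReal.ofReal |pathZ m f k₀ ω|) ^ γ / ENNReal.ofReal (s ^ γ))) ^ (α/γ) := by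
            rw [expE_term hγ0 hs (hZ0 k₀),
              ENNReal.ofReal_rpow_of_nonneg (Real.exp_nonneg _) (div_nonneg hα.le hγ0.le),
              ← Real.exp_mul]
        _ = (if ((k₀:ℕ) : ℝ≥0∞) < pathTau m C ω then
              expE ((ENNReal.ofReal |pathZ m f k₀ ω|) ^ γ / ENNReal.ofReal (s ^ γ))
              else 0) ^ (α/γ) := by rw [if_pos hk₀n]
        _ ≤ (NF γ s m C f ω) ^ (α/γ) :=
            ENNReal.rpow_le_rpow (le_NF ω k₀) (div_nonneg hα.le hγ0.le)
    calc expE ((sumBefore (pathTau m C ω) fun k => ENNReal.ofReal |pathZ m f k ω|) ^ α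
          / ENNReal.ofReal ((r * s) ^ α))
        = ENNReal.ofReal (Real.exp (T ^ α / (r*s) ^ α)) := by
          rw [hS, expE_term hα (mul_pos hr hs) hT0]
      _ ≤ ENNReal.ofReal (Real.exp (((n:ℝ) ^ β / r ^ β) * (α/β)
            + (M ^ γ / s ^ γ) * (α/γ))) :=
          ENNReal.ofReal_le_ofReal (Real.exp_le_exp.mpr hreal)
      _ = ENNReal.ofReal (Real.exp (((n:ℝ) ^ β / r ^ β) * (α/β)))
            * ENNReal.ofReal (Real.exp ((M ^ γ / s ^ γ) * (α/γ))) := by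
          rw [Real.exp_add, ENNReal.ofReal_mul (Real.exp_nonneg _)]
      _ ≤ _ := mul_le_mul' (le_of_eq hfac1.symm) hfac2

end Pointwise

section Assemble
variable {𝒳 : Type*} [MeasurableSpace 𝒳] {m : ℕ} {C : Set 𝒳} {f : 𝒳 → ℝ} {α β γ c : ℝ}

lemma psi_step (hC : MeasurableSet C) (hf : Measurable f)
    (hα : 0 < α) (hβ : α < β) (hγ : γ = α * β / (β - α))
    (Q : Measure (ℕ → 𝒳)) [IsProbabilityMeasure Q]
    {r s : ℝ} (hr : 0 < r) (hs : 0 < s)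
    (hF : ∫⁻ ω, expE ((pathTau m C ω) ^ β / ENNReal.ofReal (r ^ β)) ∂Q ≤ 2)
    (hN : ∫⁻ ω, NF γ s m C f ω ∂Q ≤ 2) :
    ∫⁻ ω, expE ((sumBefore (pathTau m C ω) fun k => ENNReal.ofReal |pathZ m f k ω|) ^ α
      / ENNReal.ofReal ((r * s) ^ α)) ∂Q ≤ 2 := by
  have hβ0 : 0 < β := lt_trans hα hβ
  have hγ0 : 0 < γ := by
    rw [hγ]; exact div_pos (mul_pos hα hβ0) (sub_pos.mpr hβ)
  have hconj := conj_exponents hα hβ hγ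
  have hFm : Measurable fun ω => expE ((pathTau m C ω) ^ β / ENNReal.ofReal (r ^ β)) :=
    measurable_expE.comp (((measurable_pathTau hC).pow_const β).div measurable_const)
  have hNm : Measurable (NF γ s m C f) := measurable_NF hC hf
  have hab : α / β * (β / α) = 1 := by field_simp
  have hag : α / γ * (γ / α) = 1 := by field_simp
  have hH := ENNReal.lintegral_mul_le_Lp_mul_Lq Q hconj
    (f := fun ω => (expE ((pathTau m C ω) ^ β / ENNReal.ofReal (r ^ β))) ^ (α / β))
    (g := fun ω => (NF γ s m C f ω) ^ (α / γ))
    ((hFm.pow_const _).aemeasurable) ((hNm.pow_const _).aemeasurable)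
  simp only [Pi.mul_apply] at hH
  calc ∫⁻ ω, expE ((sumBefore (pathTau m C ω) fun k => ENNReal.ofReal |pathZ m f k ω|) ^ α
        / ENNReal.ofReal ((r * s) ^ α)) ∂Q
      ≤ ∫⁻ ω, (expE ((pathTau m C ω) ^ β / ENNReal.ofReal (r ^ β))) ^ (α / β)
          * (NF γ s m C f ω) ^ (α / γ) ∂Q :=
        lintegral_mono fun ω => pointwise_main hα hβ hγ hr hs ω
    _ ≤ (∫⁻ ω, ((expE ((pathTau m C ω) ^ β / ENNReal.ofReal (r ^ β))) ^ (α / β)) ^ (β / α) ∂Q)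
          ^ (1 / (β / α))
        * (∫⁻ ω, ((NF γ s m C f ω) ^ (α / γ)) ^ (γ / α) ∂Q) ^ (1 / (γ / α)) := hH
    _ = (∫⁻ ω, expE ((pathTau m C ω) ^ β / ENNReal.ofReal (r ^ β)) ∂Q) ^ (α / β)
        * (∫⁻ ω, NF γ s m C f ω ∂Q) ^ (α / γ) := by
        rw [one_div_div, one_div_div]
        congr 1
        · congr 1
          refine lintegral_congr fun ω => ?_
          rw [← ENNReal.rpow_mul, hab, ENNReal.rpow_one]
        · congr 1
          refine lintegral_congr fun ω => ?_
          rw [← ENNReal.rpow_mul, hag, ENNReal.rpow_one]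
    _ ≤ (2:ℝ≥0∞) ^ (α / β) * (2:ℝ≥0∞) ^ (α / γ) :=
        mul_le_mul' (ENNReal.rpow_le_rpow hF (div_nonneg hα.le hβ0.le))
          (ENNReal.rpow_le_rpow hN (div_nonneg hα.le hγ0.le))
    _ = 2 := by
        rw [← ENNReal.rpow_add _ _ two_ne_zero ENNReal.ofNat_ne_top]
        have hsum : α / β + α / γ = 1 := by
          have := hconj.inv_add_inv_eq_one
          rwa [inv_div, inv_div] at this
        rw [hsum, ENNReal.rpow_one]

lemma psi_beta_ne_zero (hC : MeasurableSet C) (hβ0 : 0 < β)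
    (Q : Measure (ℕ → 𝒳)) [IsProbabilityMeasure Q] :
    psiNormE Q β (fun ω => pathTau m C ω) ≠ 0 := by
  have hlog4 : 0 < Real.log 4 := Real.log_pos (by norm_num)
  set r₀ : ℝ := ((Real.log 4)⁻¹) ^ (1/β) with hr₀def
  have hr₀pos : 0 < r₀ := Real.rpow_pos_of_pos (inv_pos.mpr hlog4) _
  have hr₀β : r₀ ^ β = (Real.log 4)⁻¹ := by
    rw [hr₀def, ← Real.rpow_mul (inv_pos.mpr hlog4).le, one_div_mul_cancel hβ0.ne',
      Real.rpow_one]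
  have hlb : ENNReal.ofReal r₀ ≤ psiNormE Q β (fun ω => pathTau m C ω) := by
    refine le_sInf fun a ha => ?_
    obtain ⟨r, hr, rfl, hint⟩ := ha
    by_contra hlt
    have hrr₀ : r < r₀ := by
      have := (ENNReal.ofReal_lt_ofReal_iff hr₀pos).mp (not_le.mp hlt)
      exact this
    have hrβ : r ^ β < (Real.log 4)⁻¹ := by
      rw [← hr₀β]; exact Real.rpow_lt_rpow hr.le hrr₀ hβ0
    have hinv : Real.log 4 < (r ^ β)⁻¹ := by
      rw [← inv_inv (Real.log 4)]
      exact inv_strictAnti₀ (Real.rpow_pos_of_pos hr β) hrβ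
    have hexp : (4:ℝ) < Real.exp ((r ^ β)⁻¹) := by
      calc (4:ℝ) = Real.exp (Real.log 4) := (Real.exp_log (by norm_num)).symm
        _ < Real.exp ((r ^ β)⁻¹) := Real.exp_lt_exp.mpr hinv
    have hge : ENNReal.ofReal (Real.exp ((r ^ β)⁻¹))
        ≤ ∫⁻ ω, expE ((pathTau m C ω) ^ β / ENNReal.ofReal (r ^ β)) ∂Q := by
      calc ENNReal.ofReal (Real.exp ((r ^ β)⁻¹))
          = ∫⁻ _, ENNReal.ofReal (Real.exp ((r ^ β)⁻¹)) ∂Q := by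
            rw [lintegral_const, measure_univ, mul_one]
        _ ≤ _ := by
            refine lintegral_mono fun ω => ?_
            have h1 : ENNReal.ofReal (Real.exp ((r ^ β)⁻¹))
                = expE (1 / ENNReal.ofReal (r ^ β)) := by
              rw [one_div, ← ENNReal.ofReal_inv_of_pos (Real.rpow_pos_of_pos hr β),
                expE_ofReal (inv_nonneg.mpr (Real.rpow_nonneg hr.le β))]
            rw [h1]
            refine expE_mono (ENNReal.div_le_div_right ?_ _)
            calc (1:ℝ≥0∞) = 1 ^ β := (ENNReal.one_rpow β).symm
              _ ≤ (pathTau m C ω) ^ β :=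
                ENNReal.rpow_le_rpow one_le_pathTau hβ0.le
    have h2 : Real.exp ((r ^ β)⁻¹) ≤ 2 := by
      have := hge.trans hint
      rw [show (2:ℝ≥0∞) = ENNReal.ofReal 2 by norm_num] at this
      exact (ENNReal.ofReal_le_ofReal_iff (by norm_num)).mp this
    linarith
  intro hzero
  rw [hzero, le_zero_iff, ENNReal.ofReal_eq_zero] at hlb
  linarith

end Assemble

section Main
variable {𝒳 : Type*} [MeasurableSpace 𝒳] {m : ℕ} {C : Set 𝒳} {f : 𝒳 → ℝ} {α β γ c : ℝ}
variable (κ : Kernel 𝒳 𝒳) [IsMarkovKernel κ]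
  (Pa : 𝒳 → Measure (ℕ → 𝒳)) [∀ x, IsProbabilityMeasure (Pa x)]

lemma main_general (hPa_meas : Measurable Pa)
    (hPa : ∀ x, Pa x = (κ x).bind fun y => (Pa y).map (prependPath x))
    (hf : Measurable f) (hC : MeasurableSet C)
    (hα : 0 < α) (hβ : α < β) (hγ : γ = α * β / (β - α)) (hc : 0 < c)
    {V : 𝒳 → ℝ} (hVm : Measurable V) (hV0 : ∀ x, 0 ≤ V x)
    {b : ℝ} (hb : 0 ≤ b) {h : 𝒳 → ℝ}
    (hh : ∀ x, ∫⁻ ω, eF γ c m f 0 ω ∂(Pa x) = ENNReal.ofReal (Real.exp (h x)))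
    (hdrift : ∀ x, (∫⁻ ω, ENNReal.ofReal (V (ω m)) ∂(Pa x)) +
          ENNReal.ofReal (Real.exp (h x))
        ≤ ENNReal.ofReal (V x + b * Set.indicator C (fun _ => 1) x))
    (μ : Measure 𝒳) [IsProbabilityMeasure μ]
    (hfin : (∫⁻ x, ENNReal.ofReal (V x) ∂μ) ≠ ⊤) :
    psiNormE (μ.bind Pa) α
        (fun ω => sumBefore (pathTau m C ω) fun k => ENNReal.ofReal |pathZ m f k ω|)
      ≤ psiNormE (μ.bind Pa) β (fun ω => pathTau m C ω) *
        ENNReal.ofReal (c * (max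
          (Real.log ((∫⁻ x, ENNReal.ofReal (V x) ∂μ).toReal + b) / Real.log 2) 1) ^ (1/γ)) := by
  haveI : IsProbabilityMeasure (μ.bind Pa) := isProbabilityMeasure_bind Pa hPa_meas μ
  have hβ0 : 0 < β := lt_trans hα hβ
  have hγ0 : 0 < γ := by
    rw [hγ]; exact div_pos (mul_pos hα hβ0) (sub_pos.mpr hβ)
  set A' : ℝ := (∫⁻ x, ENNReal.ofReal (V x) ∂μ).toReal + b with hA'def
  have hA'0 : 0 ≤ A' := add_nonneg ENNReal.toReal_nonneg hb
  set mg : ℝ := max (Real.log A' / Real.log 2) 1 with hmgdef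
  have hmg1 : (1:ℝ) ≤ mg := le_max_right _ _
  have hmgpos : (0:ℝ) < mg := lt_of_lt_of_le one_pos hmg1
  set D : ℝ := c * mg ^ (1/γ) with hDdef
  have hD0 : 0 < D := mul_pos hc (Real.rpow_pos_of_pos hmgpos _)
  have hNc : ∫⁻ ω, NF γ c m C f ω ∂(μ.bind Pa) ≤ ENNReal.ofReal A' := by
    refine (NF_int_le κ Pa hPa_meas hPa hf hC hγ0 hc hVm hV0 hb hh hdrift μ).trans (le_of_eq ?_)
    rw [hA'def, ENNReal.ofReal_add ENNReal.toReal_nonneg hb, ENNReal.ofReal_toReal hfin]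
  have hND : ∫⁻ ω, NF γ D m C f ω ∂(μ.bind Pa) ≤ 2 := by
    have hθ0 : 0 < mg⁻¹ := inv_pos.mpr hmgpos
    have hθ1 : mg⁻¹ ≤ 1 := inv_le_one_of_one_le₀ hmg1
    calc ∫⁻ ω, NF γ D m C f ω ∂(μ.bind Pa)
        ≤ ∫⁻ ω, (NF γ c m C f ω) ^ (mg⁻¹) ∂(μ.bind Pa) :=
          lintegral_mono fun ω => NF_scaled hγ0 hc hmg1 ω
      _ ≤ (∫⁻ ω, NF γ c m C f ω ∂(μ.bind Pa)) ^ (mg⁻¹) :=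
          jensen_rpow _ (measurable_NF hC hf).aemeasurable hθ0 hθ1
      _ ≤ (ENNReal.ofReal A') ^ (mg⁻¹) := ENNReal.rpow_le_rpow hNc hθ0.le
      _ = ENNReal.ofReal (A' ^ (mg⁻¹)) := ENNReal.ofReal_rpow_of_nonneg hA'0 hθ0.le
      _ ≤ 2 := by
          rw [show (2:ℝ≥0∞) = ENNReal.ofReal 2 by norm_num]
          exact ENNReal.ofReal_le_ofReal (rpow_inv_max_log_le hA'0)
  have key : ∀ a ∈ {a : ℝ≥0∞ | ∃ r : ℝ, 0 < r ∧ a = ENNReal.ofReal r ∧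
      ∫⁻ ω, expE ((pathTau m C ω) ^ β / ENNReal.ofReal (r ^ β)) ∂(μ.bind Pa) ≤ 2},
      psiNormE (μ.bind Pa) α
        (fun ω => sumBefore (pathTau m C ω) fun k => ENNReal.ofReal |pathZ m f k ω|)
        ≤ a * ENNReal.ofReal D := by
    rintro a ⟨r, hr, rfl, hint⟩
    have hmem : ENNReal.ofReal (r * D) ∈ {a : ℝ≥0∞ | ∃ r' : ℝ, 0 < r' ∧
        a = ENNReal.ofReal r' ∧
        ∫⁻ ω, expE ((sumBefore (pathTau m C ω) fun k => ENNReal.ofReal |pathZ m f k ω|) ^ α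
          / ENNReal.ofReal (r' ^ α)) ∂(μ.bind Pa) ≤ 2} :=
      ⟨r * D, mul_pos hr hD0, rfl, psi_step hC hf hα hβ hγ _ hr hD0 hint hND⟩
    calc psiNormE (μ.bind Pa) α _ ≤ ENNReal.ofReal (r * D) := sInf_le hmem
      _ = ENNReal.ofReal r * ENNReal.ofReal D := ENNReal.ofReal_mul hr.le
  have hDofReal : ENNReal.ofReal D ≠ 0 := by
    simp only [ne_eq, ENNReal.ofReal_eq_zero, not_le]
    exact hD0
  rcases eq_or_ne (psiNormE (μ.bind Pa) β (fun ω => pathTau m C ω)) ⊤ with htop | hne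
  · rw [htop, ENNReal.top_mul hDofReal]
    exact le_top
  · refine ENNReal.le_of_forall_pos_le_add fun ε hε hlt => ?_
    have hδpos : (0:ℝ≥0∞) < (ε : ℝ≥0∞) / ENNReal.ofReal D :=
      ENNReal.div_pos (by exact_mod_cast hε.ne') ENNReal.ofReal_ne_top
    have hsinf : psiNormE (μ.bind Pa) β (fun ω => pathTau m C ω)
        < psiNormE (μ.bind Pa) β (fun ω => pathTau m C ω) + (ε : ℝ≥0∞) / ENNReal.ofReal D :=
      ENNReal.lt_add_right hne hδpos.ne'
    obtain ⟨a, ha, halt⟩ := sInf_lt_iff.mp hsinf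
    calc psiNormE (μ.bind Pa) α
          (fun ω => sumBefore (pathTau m C ω) fun k => ENNReal.ofReal |pathZ m f k ω|)
        ≤ a * ENNReal.ofReal D := key a ha
      _ ≤ (psiNormE (μ.bind Pa) β (fun ω => pathTau m C ω)
            + (ε : ℝ≥0∞) / ENNReal.ofReal D) * ENNReal.ofReal D :=
          mul_le_mul_left halt.le _
      _ = psiNormE (μ.bind Pa) β (fun ω => pathTau m C ω) * ENNReal.ofReal D + ε := by
          rw [add_mul, ENNReal.div_mul_cancel hDofReal ENNReal.ofReal_ne_top]
end Main

end S18

/-- Regular drift condition, bound for an arbitrary initial distribution `μ`: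
`‖Σ_{k<τ_C}|Z_k(f)|‖_{ψ_α,P_μ} ≤ ‖τ_C‖_{ψ_β,P_μ} · c (max(log(μ(V)+b)/log 2, 1))^{1/γ}`,
and in particular, for `μ = δ_x`,
`‖Σ_{k<τ_C}|Z_k(f)|‖_{ψ_α,P_x} ≤ ‖τ_C‖_{ψ_β,P_x} · c (max(log(V(x)+b)/log 2, 1))^{1/γ}`;
all inequalities interpreted in `[0,∞]` (the right-hand side of the first being `∞` when
`μ(V) = ∞`).  Here `Pa x` is the Ionescu–Tulcea path measure of the canonical chain
started at `x`, characterized by the recursion `hPa`, and `P_μ = μ.bind Pa`. -/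
theorem stmt_18 {𝒳 : Type*} [MeasurableSpace 𝒳]
    (κ : Kernel 𝒳 𝒳) [IsMarkovKernel κ]
    (Pa : 𝒳 → Measure (ℕ → 𝒳)) [∀ x, IsProbabilityMeasure (Pa x)]
    (hPa_meas : Measurable Pa)
    (hPa : ∀ x, Pa x = (κ x).bind fun y => (Pa y).map (prependPath x))
    (m : ℕ) (hm : 1 ≤ m)
    (f : 𝒳 → ℝ) (hf : Measurable f)
    (α β γ c : ℝ) (hα : 0 < α) (hα1 : α ≤ 1) (hβ : α < β)
    (hγ : γ = α * β / (β - α)) (hc : 0 < c)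
    (h : 𝒳 → ℝ) (hhm : Measurable h)
    (hh : ∀ x, ∫⁻ ω, ENNReal.ofReal (Real.exp (|pathZ m f 0 ω| ^ γ / c ^ γ)) ∂(Pa x)
        = ENNReal.ofReal (Real.exp (h x)))
    (V : 𝒳 → ℝ) (hVm : Measurable V) (hV0 : ∀ x, 0 ≤ V x)
    (C : Set 𝒳) (hC : MeasurableSet C)
    (b K : ℝ) (hb : 0 < b) (hK : 0 < K) (hVK : ∀ x ∈ C, V x ≤ K)
    (hdrift : ∀ x, (∫⁻ ω, ENNReal.ofReal (V (ω m)) ∂(Pa x)) +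
          ENNReal.ofReal (Real.exp (h x))
        ≤ ENNReal.ofReal (V x + b * Set.indicator C (fun _ => 1) x))
    (μ : Measure 𝒳) [IsProbabilityMeasure μ] :
    (psiNormE (μ.bind Pa) α
        (fun ω => sumBefore (pathTau m C ω) fun k => ENNReal.ofReal |pathZ m f k ω|)
      ≤ psiNormE (μ.bind Pa) β (fun ω => pathTau m C ω) *
          (if (∫⁻ x, ENNReal.ofReal (V x) ∂μ) = ⊤ then ⊤ else
            ENNReal.ofReal (c * (max
              (Real.log ((∫⁻ x, ENNReal.ofReal (V x) ∂μ).toReal + b) / Real.log 2) 1)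
                ^ (1 / γ)))) ∧
    (∀ x : 𝒳, psiNormE (Pa x) α
        (fun ω => sumBefore (pathTau m C ω) fun k => ENNReal.ofReal |pathZ m f k ω|)
      ≤ psiNormE (Pa x) β (fun ω => pathTau m C ω) *
          ENNReal.ofReal (c * (max (Real.log (V x + b) / Real.log 2) 1) ^ (1 / γ))) := by
  have hβ0 : 0 < β := lt_trans hα hβ
  have hh' : ∀ x, ∫⁻ ω, S18.eF γ c m f 0 ω ∂(Pa x) = ENNReal.ofReal (Real.exp (h x)) :=
    fun x => hh x
  constructor
  · by_cases hfin : (∫⁻ x, ENNReal.ofReal (V x) ∂μ) = ⊤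
    · rw [if_pos hfin]
      haveI : IsProbabilityMeasure (μ.bind Pa) := S18.isProbabilityMeasure_bind Pa hPa_meas μ
      rw [ENNReal.mul_top (S18.psi_beta_ne_zero hC hβ0 (μ.bind Pa))]
      exact le_top
    · rw [if_neg hfin]
      exact S18.main_general κ Pa hPa_meas hPa hf hC hα hβ hγ hc hVm hV0 hb.le hh' hdrift μ hfin
  · intro x
    have hint : (∫⁻ y, ENNReal.ofReal (V y) ∂(Measure.dirac x)) = ENNReal.ofReal (V x) :=
      lintegral_dirac' x (ENNReal.measurable_ofReal.comp hVm)
    have hfin : (∫⁻ y, ENNReal.ofReal (V y) ∂(Measure.dirac x)) ≠ ⊤ := by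
      rw [hint]; exact ENNReal.ofReal_ne_top
    have hbind : (Measure.dirac x).bind Pa = Pa x := Measure.dirac_bind hPa_meas x
    have hmain := S18.main_general κ Pa hPa_meas hPa hf hC hα hβ hγ hc hVm hV0 hb.le hh' hdrift
      (Measure.dirac x) hfin
    rw [hbind, hint, ENNReal.toReal_ofReal (hV0 x)] at hmain
    exact hmain
end

section
/- Assume there exist a measurable function V : 𝒳 → [1,∞), a set C ∈ ℬ and constants λ ∈ (0,1), b ≥ 0 such that (P V)(x) − V(x) ≤ −λ V(x) + b·1_C(x) for every x ∈ 𝒳, and set K = sup_{x∈C} V(x) < ∞. Let τ_C = inf{k ≥ 1 : X_k ∈ C}. Then: (i) for every x ∈ 𝒳, ‖τ_C‖_{ψ_1, P_x} ≤ max( log( V(x)·1_{C^c}(x) + (b(1−λ)^{−1}+K)·1_C(x) )/log 2 , 1 ) · (log(1/(1−λ)))^{−1}; (ii) for every probability measure μ on 𝒳, ‖τ_C‖_{ψ_1, P_μ} ≤ max( log( μ(V) + (b(1−λ)^{−1}+K)·μ(C) )/log 2 , 1 ) · (log(1/(1−λ)))^{−1}, where μ(V) = ∫ V dμ; (iii)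 sup_{x∈C} ‖τ_C‖_{ψ_1, P_x} ≤ max( log( b(1−λ)^{−1}+K )/log 2 , 1 ) · (log(1/(1−λ)))^{−1}. -/
open MeasureTheory ProbabilityTheory Real
open scoped ENNReal Classical

/-- The first return time `τ_C = inf{k ≥ 1 : X_k ∈ C}`, with values in `[0,∞]`
(`inf ∅ = ∞`). -/
noncomputable def pathTau1 {𝒳 : Type*} (C : Set 𝒳) (ω : ℕ → 𝒳) : ℝ≥0∞ :=
  sInf {c : ℝ≥0∞ | ∃ j : ℕ, c = j ∧ 1 ≤ j ∧ ω j ∈ C}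

section aux
variable {𝒳 : Type*} [MeasurableSpace 𝒳]

noncomputable def pathTau0 (C : Set 𝒳) (ω : ℕ → 𝒳) : ℝ≥0∞ :=
  ⨅ j : ℕ, if ω j ∈ C then (j : ℝ≥0∞) else ⊤

lemma measurable_prependPath (x : 𝒳) : Measurable (prependPath x) := by
  apply measurable_pi_lambda
  intro n
  cases n with
  | zero => exact measurable_const
  | succ k => exact measurable_pi_apply k

lemma pathTau1_eq (C : Set 𝒳) (ω : ℕ → 𝒳) :
    pathTau1 C ω = ⨅ j : ℕ, if 1 ≤ j ∧ ω j ∈ C then (j : ℝ≥0∞) else ⊤ := by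
  apply le_antisymm
  · refine le_iInf fun j => ?_
    by_cases h : 1 ≤ j ∧ ω j ∈ C
    · rw [if_pos h]
      exact sInf_le ⟨j, rfl, h.1, h.2⟩
    · simp [if_neg h]
  · refine le_sInf fun c hc => ?_
    obtain ⟨j, rfl, h1, h2⟩ := hc
    exact iInf_le_of_le j (by simp [h1, h2])

lemma measurable_pathTau0 {C : Set 𝒳} (hC : MeasurableSet C) :
    Measurable (pathTau0 C) := by
  apply Measurable.iInf
  intro j
  exact Measurable.ite ((measurable_pi_apply j) hC) measurable_const measurable_const

lemma measurable_pathTau1 {C : Set 𝒳} (hC : MeasurableSet C) :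
    Measurable (pathTau1 C) := by
  have h : pathTau1 C = fun ω => ⨅ j : ℕ, if 1 ≤ j ∧ ω j ∈ C then (j : ℝ≥0∞) else ⊤ :=
    funext (pathTau1_eq C)
  rw [h]
  apply Measurable.iInf
  intro j
  by_cases hj : 1 ≤ j
  · simp only [hj, true_and]
    exact Measurable.ite ((measurable_pi_apply j) hC) measurable_const measurable_const
  · simp [hj]

lemma pathTau0_eq_tau1 (C : Set 𝒳) (ω : ℕ → 𝒳) (h0 : ω 0 ∉ C) :
    pathTau0 C ω = pathTau1 C ω := by
  rw [pathTau0, pathTau1_eq]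
  refine iInf_congr fun j => ?_
  cases j with
  | zero => simp [h0]
  | succ k => simp

lemma pathTau1_prepend (C : Set 𝒳) (x : 𝒳) (ω : ℕ → 𝒳) :
    pathTau1 C (prependPath x ω) = pathTau0 C ω + 1 := by
  rw [pathTau1_eq, pathTau0]
  have h1 : (⨅ j : ℕ, if ω j ∈ C then (j : ℝ≥0∞) else ⊤) + 1
      = ⨅ j : ℕ, (if ω j ∈ C then (j : ℝ≥0∞) else ⊤) + 1 := by
    exact ENNReal.iInf_add
  rw [h1]
  apply le_antisymm
  · refine le_iInf fun k => ?_
    refine iInf_le_of_le (k + 1) ?_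
    by_cases h : ω k ∈ C
    · have : prependPath x ω (k + 1) ∈ C := h
      simp only [this, h, if_pos, Nat.succ_le_succ (Nat.zero_le k), true_and, and_true]
      push_cast
      exact le_rfl
    · have : prependPath x ω (k + 1) ∉ C := h
      simp [this, h]
  · refine le_iInf fun j => ?_
    cases j with
    | zero => simp
    | succ k =>
      refine iInf_le_of_le k ?_
      by_cases h : ω k ∈ C
      · have h' : prependPath x ω (k + 1) ∈ C := h
        simp only [h, h', if_pos, Nat.succ_le_succ (Nat.zero_le k), true_and, and_true]
        push_cast
        exact le_rfl
      · have h' : prependPath x ω (k + 1) ∉ C := h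
        simp [h, h']

lemma pathTau0_prepend (C : Set 𝒳) (x : 𝒳) (ω : ℕ → 𝒳) :
    pathTau0 C (prependPath x ω) = if x ∈ C then 0 else pathTau0 C ω + 1 := by
  by_cases hx : x ∈ C
  · rw [if_pos hx]
    apply le_antisymm _ (zero_le)
    refine iInf_le_of_le 0 ?_
    have : prependPath x ω 0 ∈ C := hx
    simp [this]
  · rw [if_neg hx]
    rw [pathTau0_eq_tau1 C _ (by exact hx), pathTau1_prepend]


noncomputable def WE (L : ℝ) (t : ℝ≥0∞) : ℝ≥0∞ := expE (t * ENNReal.ofReal L)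

lemma measurable_expE : Measurable expE := by
  unfold expE
  refine Measurable.ite (measurableSet_singleton ⊤) measurable_const ?_
  exact (ENNReal.measurable_toReal.exp).ennreal_ofReal

lemma WE_zero (L : ℝ) : WE L 0 = 1 := by
  simp [WE, expE]

lemma WE_top {L : ℝ} (hL : 0 < L) : WE L ⊤ = ⊤ := by
  have h : (⊤ : ℝ≥0∞) * ENNReal.ofReal L = ⊤ := by
    rw [ENNReal.top_mul]
    simpa [ENNReal.ofReal_eq_zero] using hL.not_ge
  simp [WE, h, expE]

lemma WE_coe {L : ℝ} (hL : 0 ≤ L) {t : ℝ≥0∞} (ht : t ≠ ⊤) :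
    WE L t = ENNReal.ofReal (Real.exp (t.toReal * L)) := by
  have hfin : t * ENNReal.ofReal L ≠ ⊤ := ENNReal.mul_ne_top ht ENNReal.ofReal_ne_top
  rw [WE, expE, if_neg hfin, ENNReal.toReal_mul, ENNReal.toReal_ofReal hL]

lemma WE_add_one {L : ℝ} (hL : 0 < L) {t : ℝ≥0∞} (ht : t ≠ ⊤) :
    WE L (t + 1) = ENNReal.ofReal (Real.exp L) * WE L t := by
  rw [WE_coe hL.le (by simp [ht, ENNReal.add_ne_top]), WE_coe hL.le ht]
  rw [ENNReal.toReal_add ht (by simp), ENNReal.toReal_one, add_mul, one_mul, Real.exp_add,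
    mul_comm, ENNReal.ofReal_mul (Real.exp_pos _).le]

lemma measurable_WE (L : ℝ) : Measurable (WE L) :=
  measurable_expE.comp (measurable_id.mul_const _)

lemma lintegral_rpow_le_rpow {Ω : Type*} [MeasurableSpace Ω] (Q : Measure Ω)
    [IsProbabilityMeasure Q] {f : Ω → ℝ≥0∞} (hf : Measurable f) {θ : ℝ}
    (hθ0 : 0 < θ) (hθ1 : θ ≤ 1) :
    ∫⁻ ω, f ω ^ θ ∂Q ≤ (∫⁻ ω, f ω ∂Q) ^ θ := by
  rcases eq_or_lt_of_le hθ1 with h1 | h1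
  · subst h1; simp
  · have hpq : Real.HolderConjugate θ⁻¹ (1 - θ)⁻¹ := by
      rw [Real.holderConjugate_iff]
      constructor
      · exact one_lt_inv₀ hθ0 |>.mpr h1
      · rw [inv_inv, inv_inv]; ring
    have hmeas : AEMeasurable (fun ω => f ω ^ θ) Q := (hf.pow measurable_const).aemeasurable
    have H := ENNReal.lintegral_mul_le_Lp_mul_Lq Q hpq hmeas
      (aemeasurable_const (b := (1 : ℝ≥0∞)))
    simp only [Pi.mul_apply, mul_one, ENNReal.one_rpow, lintegral_const, measure_univ,
      one_div, inv_inv] at H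
    have h2 : ∀ ω : Ω, (f ω ^ θ) ^ θ⁻¹ = f ω := by
      intro ω
      rw [← ENNReal.rpow_mul, mul_inv_cancel₀ hθ0.ne', ENNReal.rpow_one]
    simpa [h2] using H

lemma psiNormE_le_of_exp_bound {Ω : Type*} [MeasurableSpace Ω] (Q : Measure Ω)
    [IsProbabilityMeasure Q] {Y : Ω → ℝ≥0∞} (hY : Measurable Y)
    {L A : ℝ} (hL : 0 < L) (hA : 1 ≤ A)
    (hnull : Q {ω | Y ω = ⊤} = 0)
    (hint : ∫⁻ ω, (if Y ω ≠ ⊤ then WE L (Y ω) else 0) ∂Q ≤ ENNReal.ofReal A) :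
    psiNormE Q 1 Y ≤ ENNReal.ofReal (max (Real.log A / Real.log 2) 1 * L⁻¹) := by
  set m : ℝ := max (Real.log A / Real.log 2) 1 with hm_def
  have hm1 : 1 ≤ m := le_max_right _ _
  have hm0 : 0 < m := lt_of_lt_of_le one_pos hm1
  set θ : ℝ := m⁻¹ with hθ_def
  have hθ0 : 0 < θ := inv_pos.mpr hm0
  have hθ1 : θ ≤ 1 := inv_le_one_of_one_le₀ hm1
  set r : ℝ := m * L⁻¹ with hr_def
  have hr : 0 < r := mul_pos hm0 (inv_pos.mpr hL)
  set f : Ω → ℝ≥0∞ := fun ω => if Y ω ≠ ⊤ then WE L (Y ω) else 0 with hf_def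
  have hfmeas : Measurable f := by
    refine Measurable.ite ?_ ((measurable_WE L).comp hY) measurable_const
    exact (hY (measurableSet_singleton ⊤)).compl
  have hApos : (0 : ℝ) < A := lt_of_lt_of_le one_pos hA
  have hae : ∀ᵐ ω ∂Q, Y ω ≠ ⊤ := by
    rw [ae_iff]
    simpa using hnull
  have key : ∫⁻ ω, expE (Y ω ^ (1:ℝ) / ENNReal.ofReal (r ^ (1:ℝ))) ∂Q ≤ 2 := by
    have hcongr : ∀ᵐ ω ∂Q,
        expE (Y ω ^ (1:ℝ) / ENNReal.ofReal (r ^ (1:ℝ))) = f ω ^ θ := by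
      filter_upwards [hae] with ω hω
      have ht0 : 0 ≤ (Y ω).toReal := ENNReal.toReal_nonneg
      set t : ℝ := (Y ω).toReal with ht_def
      have hYω : Y ω = ENNReal.ofReal t := (ENNReal.ofReal_toReal hω).symm
      rw [ENNReal.rpow_one, Real.rpow_one, hYω,
        ← ENNReal.ofReal_div_of_pos hr]
      have h1 : expE (ENNReal.ofReal (t / r)) = ENNReal.ofReal (Real.exp (t / r)) := by
        rw [expE, if_neg ENNReal.ofReal_ne_top, ENNReal.toReal_ofReal (div_nonneg ht0 hr.le)]
      rw [h1, hf_def]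
      simp only [hω, if_pos, ne_eq, not_false_iff]
      rw [WE_coe hL.le hω, ← ht_def,
        ENNReal.ofReal_rpow_of_pos (Real.exp_pos _)]
      congr 1
      rw [← Real.exp_log (Real.rpow_pos_of_pos (Real.exp_pos _) θ)]
      rw [Real.log_rpow (Real.exp_pos _), Real.log_exp]
      congr 1
      field_simp [hr_def, hθ_def]
      rw [hr_def, hθ_def]; field_simp
    rw [lintegral_congr_ae hcongr]
    have step1 : ∫⁻ ω, f ω ^ θ ∂Q ≤ (∫⁻ ω, f ω ∂Q) ^ θ :=
      lintegral_rpow_le_rpow Q hfmeas hθ0 hθ1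
    have step2 : (∫⁻ ω, f ω ∂Q) ^ θ ≤ (ENNReal.ofReal A) ^ θ :=
      ENNReal.rpow_le_rpow hint hθ0.le
    have step3 : (ENNReal.ofReal A) ^ θ = ENNReal.ofReal (A ^ θ) :=
      ENNReal.ofReal_rpow_of_pos hApos
    have step4 : A ^ θ ≤ 2 := by
      have hlog2 : (0:ℝ) < Real.log 2 := Real.log_pos one_lt_two
      have h5 : Real.log A ≤ m * Real.log 2 := by
        have := le_max_left (Real.log A / Real.log 2) 1
        calc Real.log A = (Real.log A / Real.log 2) * Real.log 2 := by
              field_simp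
          _ ≤ m * Real.log 2 := by
              exact mul_le_mul_of_nonneg_right this hlog2.le
      have h6 : Real.log A * θ ≤ Real.log 2 := by
        calc Real.log A * θ ≤ (m * Real.log 2) * θ :=
              mul_le_mul_of_nonneg_right h5 hθ0.le
          _ = Real.log 2 * (m * θ) := by ring
          _ = Real.log 2 := by
              rw [hθ_def, mul_inv_cancel₀ hm0.ne', mul_one]
      calc A ^ θ = Real.exp (Real.log A * θ) := by
            rw [Real.rpow_def_of_pos hApos]
        _ ≤ Real.exp (Real.log 2) := Real.exp_le_exp.mpr h6
        _ = 2 := Real.exp_log two_pos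
    calc ∫⁻ ω, f ω ^ θ ∂Q ≤ (ENNReal.ofReal A) ^ θ := le_trans step1 step2
      _ = ENNReal.ofReal (A ^ θ) := step3
      _ ≤ ENNReal.ofReal 2 := ENNReal.ofReal_le_ofReal step4
      _ = 2 := by norm_num
  exact sInf_le ⟨r, hr, rfl, key⟩

end aux


/-- Geometric drift condition `PV − V ≤ −λV + b 1_C`, `V ≥ 1`, `K = sup_{x∈C} V(x) < ∞`,
implies `ψ_1` bounds on the return time `τ_C = inf{k ≥ 1 : X_k ∈ C}`:
(i) `‖τ_C‖_{ψ_1,P_x} ≤ max(log(V(x)1_{Cᶜ}(x)+(b(1−λ)^{−1}+K)1_C(x))/log 2, 1)/log(1/(1−λ))`;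
(ii) for every initial probability distribution `μ`,
`‖τ_C‖_{ψ_1,P_μ} ≤ max(log(μ(V)+(b(1−λ)^{−1}+K)μ(C))/log 2, 1)/log(1/(1−λ))`
(the right-hand side being `∞` when `μ(V) = ∞`);
(iii) `sup_{x∈C} ‖τ_C‖_{ψ_1,P_x} ≤ max(log(b(1−λ)^{−1}+K)/log 2, 1)/log(1/(1−λ))`.
Here `Pa x` is the Ionescu–Tulcea path measure of the canonical chain started at `x`,
characterized by the recursion `hPa`, and `P_μ = μ.bind Pa`. -/
theorem stmt_19 {𝒳 : Type*} [MeasurableSpace 𝒳]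
    (κ : Kernel 𝒳 𝒳) [IsMarkovKernel κ]
    (Pa : 𝒳 → Measure (ℕ → 𝒳)) [∀ x, IsProbabilityMeasure (Pa x)]
    (hPa_meas : Measurable Pa)
    (hPa : ∀ x, Pa x = (κ x).bind fun y => (Pa y).map (prependPath x))
    (V : 𝒳 → ℝ) (hVm : Measurable V) (hV1 : ∀ x, 1 ≤ V x)
    (C : Set 𝒳) (hC : MeasurableSet C)
    (lam b K : ℝ) (hlam : lam ∈ Set.Ioo (0 : ℝ) 1) (hb : 0 ≤ b)
    (hK : ∀ x ∈ C, V x ≤ K)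
    (hdrift : ∀ x, ∫⁻ ω, ENNReal.ofReal (V (ω 1)) ∂(Pa x)
        ≤ ENNReal.ofReal (V x - lam * V x + b * Set.indicator C (fun _ => 1) x)) :
    (∀ x : 𝒳, psiNormE (Pa x) 1 (pathTau1 C)
        ≤ ENNReal.ofReal (max
            (Real.log (Set.indicator Cᶜ V x +
                (b * (1 - lam)⁻¹ + K) * Set.indicator C (fun _ => 1) x) / Real.log 2) 1 *
            (Real.log (1 / (1 - lam)))⁻¹)) ∧
    (∀ μ : Measure 𝒳, IsProbabilityMeasure μ →
      psiNormE (μ.bind Pa) 1 (pathTau1 C)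
        ≤ (if (∫⁻ x, ENNReal.ofReal (V x) ∂μ) = ⊤ then ⊤ else
            ENNReal.ofReal (max
              (Real.log ((∫⁻ x, ENNReal.ofReal (V x) ∂μ).toReal +
                  (b * (1 - lam)⁻¹ + K) * (μ C).toReal) / Real.log 2) 1 *
              (Real.log (1 / (1 - lam)))⁻¹))) ∧
    ((⨆ x ∈ C, psiNormE (Pa x) 1 (pathTau1 C))
        ≤ ENNReal.ofReal (max (Real.log (b * (1 - lam)⁻¹ + K) / Real.log 2) 1 *
            (Real.log (1 / (1 - lam)))⁻¹)) := by
  obtain ⟨hlam0, hlam1⟩ := hlam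
  have h1lam : (0:ℝ) < 1 - lam := by linarith
  set L : ℝ := Real.log (1 / (1 - lam)) with hL_def
  have hL : 0 < L := by
    apply Real.log_pos
    rw [one_div]
    exact (one_lt_inv₀ h1lam).mpr (by linarith)
  have hexpL : Real.exp L = (1 - lam)⁻¹ := by
    rw [hL_def, Real.exp_log (by positivity), one_div]
  set β : ℝ≥0∞ := ENNReal.ofReal (Real.exp L) with hβ_def
  have hβtop : β ≠ ⊤ := ENNReal.ofReal_ne_top
  set M : ℝ := b * (1 - lam)⁻¹ + K with hM_def
  set Ax : 𝒳 → ℝ := fun x => Set.indicator Cᶜ V x + M * Set.indicator C (fun _ => 1) x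
    with hAx_def
  -- recursion for lintegrals
  have hmap : ∀ x : 𝒳, Measurable fun y => (Pa y).map (prependPath x) := fun x =>
    (Measure.measurable_map _ (measurable_prependPath x)).comp hPa_meas
  have hrec : ∀ (x : 𝒳) (f : (ℕ → 𝒳) → ℝ≥0∞), Measurable f →
      ∫⁻ ω, f ω ∂(Pa x) = ∫⁻ y, ∫⁻ ω, f (prependPath x ω) ∂(Pa y) ∂(κ x) := by
    intro x f hf
    rw [hPa x, Measure.lintegral_bind (hmap x).aemeasurable hf.aemeasurable]
    exact lintegral_congr fun y => lintegral_map hf (measurable_prependPath x)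
  have hV0 : ∀ y : 𝒳, ∫⁻ ω, ENNReal.ofReal (V (ω 0)) ∂(Pa y) = ENNReal.ofReal (V y) := by
    intro y
    rw [hrec y (fun ω => ENNReal.ofReal (V (ω 0))) ((hVm.comp (measurable_pi_apply 0)).ennreal_ofReal)]
    have h1 : ∀ z : 𝒳, ∫⁻ ω, ENNReal.ofReal (V (prependPath y ω 0)) ∂(Pa z)
        = ENNReal.ofReal (V y) := by
      intro z
      simp [prependPath, lintegral_const]
    rw [lintegral_congr h1]
    simp [lintegral_const]
  have hκV : ∀ x : 𝒳, ∫⁻ y, ENNReal.ofReal (V y) ∂(κ x)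
      ≤ ENNReal.ofReal (V x - lam * V x + b * Set.indicator C (fun _ => 1) x) := by
    intro x
    have h0 := hdrift x
    rw [hrec x (fun ω => ENNReal.ofReal (V (ω 1))) ((hVm.comp (measurable_pi_apply 1)).ennreal_ofReal)] at h0
    have h1 : ∫⁻ y, ∫⁻ ω, ENNReal.ofReal (V (prependPath x ω 1)) ∂(Pa y) ∂(κ x)
        = ∫⁻ y, ENNReal.ofReal (V y) ∂(κ x) := lintegral_congr fun y => hV0 y
    rwa [h1] at h0
  -- measurability of basic integrands
  have hτ0m : Measurable (pathTau0 C) := measurable_pathTau0 hC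
  have hτ1m : Measurable (pathTau1 C) := measurable_pathTau1 hC
  have hgm : ∀ n : ℕ, Measurable fun ω =>
      (if pathTau0 C ω ≤ (n : ℝ≥0∞) then WE L (pathTau0 C ω) else 0) := by
    intro n
    exact Measurable.ite (hτ0m measurableSet_Iic) ((measurable_WE L).comp hτ0m)
      measurable_const
  have honele : ∀ x : 𝒳, (1 : ℝ≥0∞) ≤ ENNReal.ofReal (V x) := fun x =>
    ENNReal.one_le_ofReal.mpr (hV1 x)
  -- G induction
  have hG : ∀ n : ℕ, ∀ x : 𝒳,
      ∫⁻ ω, (if pathTau0 C ω ≤ (n : ℝ≥0∞) then WE L (pathTau0 C ω) else 0) ∂(Pa x)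
        ≤ ENNReal.ofReal (V x) := by
    intro n
    induction n with
    | zero =>
      intro x
      have hle1 : ∀ ω : ℕ → 𝒳,
          (if pathTau0 C ω ≤ ((0:ℕ) : ℝ≥0∞) then WE L (pathTau0 C ω) else 0) ≤ 1 := by
        intro ω
        by_cases h : pathTau0 C ω ≤ ((0:ℕ) : ℝ≥0∞)
        · rw [if_pos h]
          have h0 : pathTau0 C ω = 0 := by simpa using h
          rw [h0, WE_zero]
        · rw [if_neg h]; exact zero_le
      calc ∫⁻ ω, (if pathTau0 C ω ≤ ((0:ℕ) : ℝ≥0∞) then WE L (pathTau0 C ω) else 0) ∂(Pa x)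
          ≤ ∫⁻ _, (1:ℝ≥0∞) ∂(Pa x) := lintegral_mono hle1
        _ = 1 := by simp
        _ ≤ ENNReal.ofReal (V x) := honele x
    | succ n ih =>
      intro x
      rw [hrec x _ (hgm (n + 1))]
      by_cases hx : x ∈ C
      · have hpt : ∀ ω, (if pathTau0 C (prependPath x ω) ≤ ((n+1 : ℕ) : ℝ≥0∞)
            then WE L (pathTau0 C (prependPath x ω)) else 0) = 1 := by
          intro ω
          rw [pathTau0_prepend, if_pos hx, if_pos (zero_le), WE_zero]
        calc ∫⁻ y, ∫⁻ ω, (if pathTau0 C (prependPath x ω) ≤ ((n+1 : ℕ) : ℝ≥0∞)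
              then WE L (pathTau0 C (prependPath x ω)) else 0) ∂(Pa y) ∂(κ x)
            = ∫⁻ y, (1:ℝ≥0∞) ∂(κ x) := by
              refine lintegral_congr fun y => ?_
              rw [lintegral_congr hpt]
              simp [lintegral_const]
          _ ≤ ENNReal.ofReal (V x) := by simpa [lintegral_const] using honele x
      · have hpt : ∀ ω, (if pathTau0 C (prependPath x ω) ≤ ((n+1 : ℕ) : ℝ≥0∞)
            then WE L (pathTau0 C (prependPath x ω)) else 0)
            = β * (if pathTau0 C ω ≤ (n : ℝ≥0∞) then WE L (pathTau0 C ω) else 0) := by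
          intro ω
          rw [pathTau0_prepend, if_neg hx]
          rcases eq_or_ne (pathTau0 C ω) ⊤ with ht | ht
          · rw [ht]
            simp [ENNReal.natCast_ne_top]
          · have hiff : pathTau0 C ω + 1 ≤ ((n+1 : ℕ) : ℝ≥0∞) ↔ pathTau0 C ω ≤ (n : ℝ≥0∞) := by
              rw [Nat.cast_succ]
              exact ENNReal.add_le_add_iff_right ENNReal.one_ne_top
            by_cases hle : pathTau0 C ω ≤ (n : ℝ≥0∞)
            · rw [if_pos (hiff.mpr hle), if_pos hle, WE_add_one hL ht]
            · rw [if_neg (fun h => hle (hiff.mp h)), if_neg hle, mul_zero]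
        calc ∫⁻ y, ∫⁻ ω, (if pathTau0 C (prependPath x ω) ≤ ((n+1 : ℕ) : ℝ≥0∞)
              then WE L (pathTau0 C (prependPath x ω)) else 0) ∂(Pa y) ∂(κ x)
            = ∫⁻ y, β * ∫⁻ ω, (if pathTau0 C ω ≤ (n : ℝ≥0∞)
                then WE L (pathTau0 C ω) else 0) ∂(Pa y) ∂(κ x) := by
              refine lintegral_congr fun y => ?_
              rw [lintegral_congr hpt, lintegral_const_mul' _ _ hβtop]
          _ = β * ∫⁻ y, ∫⁻ ω, (if pathTau0 C ω ≤ (n : ℝ≥0∞)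
                then WE L (pathTau0 C ω) else 0) ∂(Pa y) ∂(κ x) :=
              lintegral_const_mul' _ _ hβtop
          _ ≤ β * ∫⁻ y, ENNReal.ofReal (V y) ∂(κ x) :=
              mul_le_mul_right (lintegral_mono fun y => ih y) _
          _ ≤ β * ENNReal.ofReal (V x - lam * V x + b * Set.indicator C (fun _ => 1) x) :=
              mul_le_mul_right (hκV x) _
          _ = ENNReal.ofReal (V x) := by
              rw [hβ_def, ← ENNReal.ofReal_mul (Real.exp_pos _).le]
              congr 1
              rw [Set.indicator_of_notMem hx, hexpL]
              field_simp
              ring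
  -- T induction (for finiteness of pathTau0)
  have hT : ∀ n : ℕ, ∀ x : 𝒳,
      ∫⁻ ω, WE L (min (pathTau0 C ω) (n : ℝ≥0∞)) ∂(Pa x) ≤ ENNReal.ofReal (V x) := by
    intro n
    have hTm : ∀ m : ℕ, Measurable fun ω => WE L (min (pathTau0 C ω) (m : ℝ≥0∞)) := fun m =>
      (measurable_WE L).comp (hτ0m.min measurable_const)
    induction n with
    | zero =>
      intro x
      have h0 : ∀ ω : ℕ → 𝒳, WE L (min (pathTau0 C ω) ((0:ℕ) : ℝ≥0∞)) = 1 := by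
        intro ω
        rw [Nat.cast_zero, min_eq_right (zero_le), WE_zero]
      rw [lintegral_congr h0]
      simpa [lintegral_const] using honele x
    | succ n ih =>
      intro x
      rw [hrec x _ (hTm (n+1))]
      by_cases hx : x ∈ C
      · have hpt : ∀ ω, WE L (min (pathTau0 C (prependPath x ω)) ((n+1 : ℕ) : ℝ≥0∞)) = 1 := by
          intro ω
          rw [pathTau0_prepend, if_pos hx, min_eq_left (zero_le), WE_zero]
        calc ∫⁻ y, ∫⁻ ω, WE L (min (pathTau0 C (prependPath x ω)) ((n+1:ℕ) : ℝ≥0∞)) ∂(Pa y) ∂(κ x)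
            = ∫⁻ y, (1:ℝ≥0∞) ∂(κ x) := by
              refine lintegral_congr fun y => ?_
              rw [lintegral_congr hpt]
              simp [lintegral_const]
          _ ≤ ENNReal.ofReal (V x) := by simpa [lintegral_const] using honele x
      · have hpt : ∀ ω, WE L (min (pathTau0 C (prependPath x ω)) ((n+1 : ℕ) : ℝ≥0∞))
            = β * WE L (min (pathTau0 C ω) (n : ℝ≥0∞)) := by
          intro ω
          rw [pathTau0_prepend, if_neg hx, Nat.cast_succ, min_add_add_right,
            WE_add_one hL (ne_top_of_le_ne_top (ENNReal.natCast_ne_top n) (min_le_right _ _))]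
        calc ∫⁻ y, ∫⁻ ω, WE L (min (pathTau0 C (prependPath x ω)) ((n+1:ℕ) : ℝ≥0∞)) ∂(Pa y) ∂(κ x)
            = β * ∫⁻ y, ∫⁻ ω, WE L (min (pathTau0 C ω) (n : ℝ≥0∞)) ∂(Pa y) ∂(κ x) := by
              rw [← lintegral_const_mul' _ _ hβtop]
              refine lintegral_congr fun y => ?_
              rw [lintegral_congr hpt, lintegral_const_mul' _ _ hβtop]
          _ ≤ β * ∫⁻ y, ENNReal.ofReal (V y) ∂(κ x) :=
              mul_le_mul_right (lintegral_mono fun y => ih y) _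
          _ ≤ β * ENNReal.ofReal (V x - lam * V x + b * Set.indicator C (fun _ => 1) x) :=
              mul_le_mul_right (hκV x) _
          _ = ENNReal.ofReal (V x) := by
              rw [hβ_def, ← ENNReal.ofReal_mul (Real.exp_pos _).le]
              congr 1
              rw [Set.indicator_of_notMem hx, hexpL]
              field_simp
              ring
  -- pathTau0 is a.s. finite
  have hfin0 : ∀ x : 𝒳, Pa x {ω | pathTau0 C ω = ⊤} = 0 := by
    intro x
    set p : ℝ≥0∞ := Pa x {ω | pathTau0 C ω = ⊤} with hp_def
    have hsm : MeasurableSet {ω : ℕ → 𝒳 | pathTau0 C ω = ⊤} := hτ0m (measurableSet_singleton ⊤)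
    have hbnd : ∀ n : ℕ, ENNReal.ofReal (Real.exp (n * L)) * p ≤ ENNReal.ofReal (V x) := by
      intro n
      have hpoint : ∀ ω : ℕ → 𝒳,
          Set.indicator {ω | pathTau0 C ω = ⊤} (fun _ => ENNReal.ofReal (Real.exp (n * L))) ω
            ≤ WE L (min (pathTau0 C ω) (n : ℝ≥0∞)) := by
        intro ω
        by_cases h : pathTau0 C ω = ⊤
        · rw [Set.indicator_of_mem (show ω ∈ {ω : ℕ → 𝒳 | pathTau0 C ω = ⊤} from h)]
          have hmin : min (pathTau0 C ω) (n : ℝ≥0∞) = (n : ℝ≥0∞) := by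
            rw [h]; exact min_eq_right le_top
          rw [hmin, WE_coe hL.le (ENNReal.natCast_ne_top n)]
          simp
        · rw [Set.indicator_of_notMem (show ω ∉ {ω : ℕ → 𝒳 | pathTau0 C ω = ⊤} from h)]
          exact zero_le
      calc ENNReal.ofReal (Real.exp (n * L)) * p
          = ∫⁻ ω, Set.indicator {ω | pathTau0 C ω = ⊤}
              (fun _ => ENNReal.ofReal (Real.exp (n * L))) ω ∂(Pa x) := by
            rw [lintegral_indicator_const hsm]
        _ ≤ ∫⁻ ω, WE L (min (pathTau0 C ω) (n : ℝ≥0∞)) ∂(Pa x) := lintegral_mono hpoint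
        _ ≤ ENNReal.ofReal (V x) := hT n x
    by_contra hne
    have hptop : p ≠ ⊤ := measure_ne_top _ _
    have hppos : 0 < p.toReal := ENNReal.toReal_pos hne hptop
    have hVpos : (0:ℝ) < V x := lt_of_lt_of_le one_pos (hV1 x)
    obtain ⟨n, hn⟩ := pow_unbounded_of_one_lt (V x / p.toReal)
      (Real.one_lt_exp_iff.mpr hL)
    have hexpn : V x / p.toReal < Real.exp (n * L) := by
      rwa [Real.exp_nat_mul]
    have hlt : V x / Real.exp (n * L) < p.toReal := by
      rw [div_lt_iff₀ (Real.exp_pos _)]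
      rw [div_lt_iff₀ hppos] at hexpn
      linarith [hexpn]
    have h1 : p ≤ ENNReal.ofReal (V x) / ENNReal.ofReal (Real.exp (n * L)) := by
      rw [ENNReal.le_div_iff_mul_le (Or.inl (by simp [Real.exp_pos])) (Or.inl ENNReal.ofReal_ne_top)]
      rw [mul_comm]
      exact hbnd n
    rw [← ENNReal.ofReal_div_of_pos (Real.exp_pos _)] at h1
    have h2 : ENNReal.ofReal (V x / Real.exp (n * L)) < ENNReal.ofReal p.toReal :=
      (ENNReal.ofReal_lt_ofReal_iff hppos).mpr hlt
    rw [ENNReal.ofReal_toReal hptop] at h2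
    exact absurd (lt_of_le_of_lt h1 h2) (lt_irrefl p)
  -- pathTau1 is a.s. finite
  have hfin1 : ∀ x : 𝒳, Pa x {ω | pathTau1 C ω = ⊤} = 0 := by
    intro x
    have hsm : MeasurableSet {ω : ℕ → 𝒳 | pathTau1 C ω = ⊤} := hτ1m (measurableSet_singleton ⊤)
    have h1 : Pa x {ω | pathTau1 C ω = ⊤}
        = ∫⁻ ω, Set.indicator {ω | pathTau1 C ω = ⊤} (fun _ => (1:ℝ≥0∞)) ω ∂(Pa x) := by
      rw [lintegral_indicator_const hsm, one_mul]
    rw [h1, hrec x _ ((measurable_const.indicator hsm))]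
    have hpt : ∀ (ω : ℕ → 𝒳),
        Set.indicator {ω : ℕ → 𝒳 | pathTau1 C ω = ⊤} (fun _ => (1:ℝ≥0∞)) (prependPath x ω)
          = Set.indicator {ω : ℕ → 𝒳 | pathTau0 C ω = ⊤} (fun _ => (1:ℝ≥0∞)) ω := by
      intro ω
      have hmem : prependPath x ω ∈ {ω : ℕ → 𝒳 | pathTau1 C ω = ⊤}
          ↔ ω ∈ {ω : ℕ → 𝒳 | pathTau0 C ω = ⊤} := by
        simp only [Set.mem_setOf_eq, pathTau1_prepend]
        rw [ENNReal.add_eq_top]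
        simp
      by_cases h : ω ∈ {ω : ℕ → 𝒳 | pathTau0 C ω = ⊤}
      · rw [Set.indicator_of_mem (hmem.mpr h), Set.indicator_of_mem h]
      · rw [Set.indicator_of_notMem (fun hh => h (hmem.mp hh)), Set.indicator_of_notMem h]
    have h2 : ∀ y : 𝒳, ∫⁻ ω, Set.indicator {ω : ℕ → 𝒳 | pathTau1 C ω = ⊤}
        (fun _ => (1:ℝ≥0∞)) (prependPath x ω) ∂(Pa y) = 0 := by
      intro y
      rw [lintegral_congr hpt, lintegral_indicator_const (show MeasurableSet {ω : ℕ → 𝒳 | pathTau0 C ω = ⊤} from hτ0m (measurableSet_singleton ⊤)),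
        one_mul, hfin0 y]
    rw [lintegral_congr h2]
    simp
  -- main integral bound for Pa x
  have hfm : Measurable fun ω => (if pathTau1 C ω ≠ ⊤ then WE L (pathTau1 C ω) else 0) := by
    refine Measurable.ite ?_ ((measurable_WE L).comp hτ1m) measurable_const
    exact (hτ1m (measurableSet_singleton ⊤)).compl
  have hmain : ∀ x : 𝒳,
      ∫⁻ ω, (if pathTau1 C ω ≠ ⊤ then WE L (pathTau1 C ω) else 0) ∂(Pa x)
        ≤ ENNReal.ofReal (Ax x) := by
    intro x
    have hsup : ∀ ω : ℕ → 𝒳, (if pathTau1 C ω ≠ ⊤ then WE L (pathTau1 C ω) else 0)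
        = ⨆ n : ℕ, (if pathTau1 C ω ≤ (n : ℝ≥0∞) then WE L (pathTau1 C ω) else 0) := by
      intro ω
      rcases eq_or_ne (pathTau1 C ω) ⊤ with h | h
      · rw [h]
        simp [ENNReal.natCast_ne_top]
      · rw [if_pos h]
        obtain ⟨n, hn⟩ := ENNReal.exists_nat_gt h
        apply le_antisymm
        · refine le_iSup_of_le n ?_
          exact le_of_eq (if_pos hn.le).symm
        · refine iSup_le fun m => ?_
          by_cases hm : pathTau1 C ω ≤ (m : ℝ≥0∞)
          · exact le_of_eq (if_pos hm)
          · exact le_trans (le_of_eq (if_neg hm)) (zero_le)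
    rw [lintegral_congr hsup]
    have hmono : Monotone fun (n : ℕ) (ω : ℕ → 𝒳) =>
        (if pathTau1 C ω ≤ (n : ℝ≥0∞) then WE L (pathTau1 C ω) else 0) := by
      intro n m hnm ω
      show (if pathTau1 C ω ≤ (n : ℝ≥0∞) then WE L (pathTau1 C ω) else 0)
          ≤ (if pathTau1 C ω ≤ (m : ℝ≥0∞) then WE L (pathTau1 C ω) else 0)
      by_cases h : pathTau1 C ω ≤ (n : ℝ≥0∞)
      · rw [if_pos h, if_pos (le_trans h (by exact_mod_cast Nat.cast_le.mpr hnm))]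
      · rw [if_neg h]; exact zero_le
    have hgm1 : ∀ n : ℕ, Measurable fun ω =>
        (if pathTau1 C ω ≤ (n : ℝ≥0∞) then WE L (pathTau1 C ω) else 0) := fun n =>
      Measurable.ite (hτ1m measurableSet_Iic) ((measurable_WE L).comp hτ1m) measurable_const
    rw [lintegral_iSup hgm1 hmono]
    refine iSup_le fun n => ?_
    rw [hrec x _ (hgm1 n)]
    have hpt : ∀ ω : ℕ → 𝒳, (if pathTau1 C (prependPath x ω) ≤ (n : ℝ≥0∞)
        then WE L (pathTau1 C (prependPath x ω)) else 0)
        ≤ β * (if pathTau0 C ω ≤ (n : ℝ≥0∞) then WE L (pathTau0 C ω) else 0) := by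
      intro ω
      rw [pathTau1_prepend]
      rcases eq_or_ne (pathTau0 C ω) ⊤ with ht | ht
      · rw [ht]
        simp [ENNReal.natCast_ne_top]
      · by_cases hle : pathTau0 C ω + 1 ≤ (n : ℝ≥0∞)
        · rw [if_pos hle, WE_add_one hL ht,
            if_pos (le_trans (self_le_add_right _ 1) hle)]
        · rw [if_neg hle]; exact zero_le
    calc ∫⁻ y, ∫⁻ ω, (if pathTau1 C (prependPath x ω) ≤ (n : ℝ≥0∞)
          then WE L (pathTau1 C (prependPath x ω)) else 0) ∂(Pa y) ∂(κ x)
        ≤ ∫⁻ y, ∫⁻ ω, β * (if pathTau0 C ω ≤ (n : ℝ≥0∞)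
            then WE L (pathTau0 C ω) else 0) ∂(Pa y) ∂(κ x) :=
          lintegral_mono fun y => lintegral_mono hpt
      _ = β * ∫⁻ y, ∫⁻ ω, (if pathTau0 C ω ≤ (n : ℝ≥0∞)
            then WE L (pathTau0 C ω) else 0) ∂(Pa y) ∂(κ x) := by
          rw [← lintegral_const_mul' _ _ hβtop]
          exact lintegral_congr fun y => lintegral_const_mul' _ _ hβtop
      _ ≤ β * ∫⁻ y, ENNReal.ofReal (V y) ∂(κ x) :=
          mul_le_mul_right (lintegral_mono fun y => hG n y) _
      _ ≤ β * ENNReal.ofReal (V x - lam * V x + b * Set.indicator C (fun _ => 1) x) :=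
          mul_le_mul_right (hκV x) _
      _ ≤ ENNReal.ofReal (Ax x) := by
          rw [hβ_def, ← ENNReal.ofReal_mul (Real.exp_pos _).le]
          apply ENNReal.ofReal_le_ofReal
          rw [hexpL]
          by_cases hx : x ∈ C
          · rw [hAx_def]
            simp only [Set.indicator_of_mem hx, Set.indicator_of_notMem (Set.notMem_compl_iff.mpr hx),
              mul_one, zero_add]
            have hKx := hK x hx
            have h1 : (1 - lam)⁻¹ * (V x - lam * V x + b) = V x + b * (1-lam)⁻¹ := by
              field_simp
            rw [h1, hM_def]
            linarith
          · rw [hAx_def]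
            simp only [Set.indicator_of_mem (Set.mem_compl hx),
              Set.indicator_of_notMem hx, mul_zero, add_zero]
            have h1 : (1 - lam)⁻¹ * (V x - lam * V x) = V x := by
              field_simp
            rw [h1]
  have hA1 : ∀ x : 𝒳, 1 ≤ Ax x := by
    intro x
    rw [hAx_def]
    by_cases hx : x ∈ C
    · simp only [Set.indicator_of_mem hx, Set.indicator_of_notMem (Set.notMem_compl_iff.mpr hx),
        mul_one, zero_add, hM_def]
      have := hK x hx
      have hbl : 0 ≤ b * (1-lam)⁻¹ := mul_nonneg hb (by positivity)
      linarith [hV1 x]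
    · simp only [Set.indicator_of_mem (Set.mem_compl hx), Set.indicator_of_notMem hx,
        mul_zero, add_zero]
      exact hV1 x
  -- Part (i)
  have part1 : ∀ x : 𝒳, psiNormE (Pa x) 1 (pathTau1 C)
      ≤ ENNReal.ofReal (max (Real.log (Ax x) / Real.log 2) 1 * L⁻¹) := fun x =>
    psiNormE_le_of_exp_bound (Pa x) hτ1m hL (hA1 x) (hfin1 x) (hmain x)
  refine ⟨fun x => part1 x, ?_, ?_⟩
  · -- Part (ii)
    intro μ hμ
    by_cases hfin : (∫⁻ x, ENNReal.ofReal (V x) ∂μ) = ⊤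
    · rw [if_pos hfin]
      exact le_top
    · rw [if_neg hfin]
      set Q : Measure (ℕ → 𝒳) := μ.bind Pa with hQ_def
      haveI hQprob : IsProbabilityMeasure Q := by
        constructor
        rw [hQ_def, Measure.bind_apply MeasurableSet.univ hPa_meas.aemeasurable]
        simp
      set Aμ : ℝ := (∫⁻ x, ENNReal.ofReal (V x) ∂μ).toReal + M * (μ C).toReal with hAμ_def
      have hnullQ : Q {ω | pathTau1 C ω = ⊤} = 0 := by
        rw [hQ_def, Measure.bind_apply (show MeasurableSet {ω : ℕ → 𝒳 | pathTau1 C ω = ⊤} from hτ1m (measurableSet_singleton ⊤)) hPa_meas.aemeasurable]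
        simp [hfin1]
      have hMC : 0 ≤ M * (μ C).toReal := by
        rcases Set.eq_empty_or_nonempty C with hCe | ⟨x0, hx0⟩
        · simp [hCe]
        · have h1 : (0:ℝ) ≤ M := by
            rw [hM_def]
            have := hK x0 hx0
            have hbl : 0 ≤ b * (1-lam)⁻¹ := mul_nonneg hb (by positivity)
            linarith [hV1 x0]
          exact mul_nonneg h1 ENNReal.toReal_nonneg
      have hintQ : ∫⁻ ω, (if pathTau1 C ω ≠ ⊤ then WE L (pathTau1 C ω) else 0) ∂Q
          ≤ ENNReal.ofReal Aμ := by
        rw [hQ_def, Measure.lintegral_bind hPa_meas.aemeasurable hfm.aemeasurable]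
        calc ∫⁻ x, ∫⁻ ω, (if pathTau1 C ω ≠ ⊤ then WE L (pathTau1 C ω) else 0) ∂(Pa x) ∂μ
            ≤ ∫⁻ x, ENNReal.ofReal (Ax x) ∂μ := lintegral_mono fun x => hmain x
          _ ≤ ∫⁻ x, (ENNReal.ofReal (V x)
                + Set.indicator C (fun _ => ENNReal.ofReal M) x) ∂μ := by
              refine lintegral_mono fun x => ?_
              by_cases hx : x ∈ C
              · rw [hAx_def]
                simp only [Set.indicator_of_mem hx, Set.indicator_of_notMem (Set.notMem_compl_iff.mpr hx),
                  mul_one, zero_add]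
                exact le_add_self
              · rw [hAx_def]
                simp only [Set.indicator_of_mem (Set.mem_compl hx),
                  Set.indicator_of_notMem hx, mul_zero, add_zero]
                exact le_rfl
          _ = (∫⁻ x, ENNReal.ofReal (V x) ∂μ) + ENNReal.ofReal M * μ C := by
              rw [lintegral_add_right _ (measurable_const.indicator hC),
                lintegral_indicator_const hC]
          _ ≤ ENNReal.ofReal Aμ := by
              rw [hAμ_def, ENNReal.ofReal_add ENNReal.toReal_nonneg hMC]
              apply add_le_add
              · rw [ENNReal.ofReal_toReal hfin]
              · rcases Set.eq_empty_or_nonempty C with hCe | ⟨x0, hx0⟩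
                · simp [hCe]
                · have hM0 : (0:ℝ) ≤ M := by
                    rw [hM_def]
                    have := hK x0 hx0
                    have hbl : 0 ≤ b * (1-lam)⁻¹ := mul_nonneg hb (by positivity)
                    linarith [hV1 x0]
                  have heq : ENNReal.ofReal M * μ C = ENNReal.ofReal (M * (μ C).toReal) := by
                    rw [ENNReal.ofReal_mul hM0, ENNReal.ofReal_toReal (measure_ne_top μ C)]
                  exact heq.le
      have hA1μ : 1 ≤ Aμ := by
        rw [hAμ_def]
        have h1 : (1:ℝ≥0∞) ≤ ∫⁻ x, ENNReal.ofReal (V x) ∂μ := by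
          calc (1:ℝ≥0∞) = ∫⁻ _, (1:ℝ≥0∞) ∂μ := by simp
            _ ≤ ∫⁻ x, ENNReal.ofReal (V x) ∂μ := lintegral_mono fun x => honele x
        have h2 : (1:ℝ) ≤ (∫⁻ x, ENNReal.ofReal (V x) ∂μ).toReal := by
          have := ENNReal.toReal_mono hfin h1
          simpa using this
        linarith
      exact psiNormE_le_of_exp_bound Q hτ1m hL hA1μ hnullQ hintQ
  · -- Part (iii)
    refine iSup₂_le fun x hx => ?_
    have h1 := part1 x
    have h2 : Ax x = M := by
      rw [hAx_def]
      simp [Set.indicator_of_mem hx, Set.indicator_of_notMem (Set.notMem_compl_iff.mpr hx)]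
    rwa [h2, hM_def] at h1
end
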